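/- arXiv:1206.0551 — 9 statements merged into one kernel-verified Lean document; each statement's English description precedes it below -/
import Mathlib

section
/- Let X be a compact metric space, T : X → X continuous, and F : (0,∞) → [0,∞) non-increasing. If x ∈ X is F-aperiodic, then for every ε > 0 and all integers 0 ≤ s₁ < s₂ ≤ F(ε), the open balls B(T^{s₁}x, ε/2) and B(T^{s₂}x, ε/2) are disjoint; consequently F(ε) ≤ N(X, ε/2), the maximal number of disjoint metric balls of radius ε/2 in X. -/
/-- For an F-aperiodic point `x`, the balls `B(T^{s₁}x, ε/2)` and
`B(T^{s₂}x, ε/2)` are disjoint whenever `0 ≤ s₁ < s₂ ≤ F ε`; consequently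
`F ε ≤ N(X, ε/2)`, the maximal number of pairwise disjoint balls of radius `ε/2`. -/
theorem faperiodic_disjoint_balls {X : Type*} [MetricSpace X] [CompactSpace X]
    (T : X → X) (hT : Continuous T) (F : ℝ → ℝ)
    (hF : ∀ ε ε' : ℝ, 0 < ε → ε ≤ ε' → F ε' ≤ F ε) (x : X)
    (hx : ∀ i : ℕ, ∀ ε : ℝ, 0 < ε → ∀ s : ℕ, 1 ≤ s →
      dist (T^[i] x) (T^[i + s] x) < ε → F ε < s) :
    ∀ ε : ℝ, 0 < ε →
      (∀ s₁ s₂ : ℕ, s₁ < s₂ → (s₂ : ℝ) ≤ F ε →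
        Disjoint (Metric.ball (T^[s₁] x) (ε / 2)) (Metric.ball (T^[s₂] x) (ε / 2))) ∧
      (∀ N : ℕ, (∀ t : Finset X,
          (t : Set X).Pairwise
            (fun a b => Disjoint (Metric.ball a (ε / 2)) (Metric.ball b (ε / 2))) →
          t.card ≤ N) → F ε ≤ N) := by
  classical
  intro ε hε
  have hdisj : ∀ s₁ s₂ : ℕ, s₁ < s₂ → (s₂ : ℝ) ≤ F ε →
      Disjoint (Metric.ball (T^[s₁] x) (ε / 2)) (Metric.ball (T^[s₂] x) (ε / 2)) := by
    intro s₁ s₂ hlt hle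
    rw [Set.disjoint_left]
    intro y hy₁ hy₂
    have hd : dist (T^[s₁] x) (T^[s₂] x) < ε := by
      calc dist (T^[s₁] x) (T^[s₂] x) ≤ dist (T^[s₁] x) y + dist y (T^[s₂] x) :=
            dist_triangle _ _ _
        _ < ε / 2 + ε / 2 := by
            have h1 := Metric.mem_ball'.mp hy₁
            have h2 := Metric.mem_ball.mp hy₂
            linarith
        _ = ε := by ring
    have h1 : 1 ≤ s₂ - s₁ := by omega
    have h2 : s₁ + (s₂ - s₁) = s₂ := by omega
    have := hx s₁ ε hε (s₂ - s₁) h1 (by rwa [h2])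
    have : ((s₂ - s₁ : ℕ) : ℝ) ≤ (s₂ : ℝ) := by exact_mod_cast Nat.sub_le _ _
    linarith
  refine ⟨hdisj, ?_⟩
  intro N hN
  by_cases hFε : F ε < 0
  · have : (0 : ℝ) ≤ N := Nat.cast_nonneg N
    linarith
  push_neg at hFε
  set k := ⌊F ε⌋₊ with hk
  -- points T^[0]x .. T^[k]x
  have hpts : ∀ s, s ≤ k → (s : ℝ) ≤ F ε := fun s hs => by
    calc (s : ℝ) ≤ (k : ℝ) := by exact_mod_cast hs
      _ ≤ F ε := Nat.floor_le hFε
  have key : ∀ a b : ℕ, a < b → b ≤ k → T^[a] x ≠ T^[b] x := by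
    intro a b hltab hbk hab
    have hd := hdisj a b hltab (hpts b hbk)
    rw [hab, disjoint_self] at hd
    exact (Metric.nonempty_ball.mpr (by linarith : (0:ℝ) < ε / 2)).ne_empty hd
  have hinj : Set.InjOn (fun s => T^[s] x) (Finset.range (k + 1) : Set ℕ) := by
    intro a ha b hb hab
    have ha' : a ≤ k := by
      have := Finset.mem_range.mp (by exact_mod_cast ha : a ∈ Finset.range (k+1)); omega
    have hb' : b ≤ k := by
      have := Finset.mem_range.mp (by exact_mod_cast hb : b ∈ Finset.range (k+1)); omega
    simp only at hab
    rcases lt_trichotomy a b with h | h | h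
    · exact absurd hab (key a b h hb')
    · exact h
    · exact absurd hab.symm (key b a h ha')
  let t : Finset X := (Finset.range (k + 1)).image (fun s => T^[s] x)
  have hcard : t.card = k + 1 := by
    rw [Finset.card_image_of_injOn hinj, Finset.card_range]
  have hpw : (t : Set X).Pairwise
      (fun a b => Disjoint (Metric.ball a (ε / 2)) (Metric.ball b (ε / 2))) := by
    intro a ha b hb hne
    simp only [t, Finset.coe_image, Set.mem_image, Finset.coe_range, Set.mem_Iio] at ha hb
    obtain ⟨s₁, hs₁, rfl⟩ := ha
    obtain ⟨s₂, hs₂, rfl⟩ := hb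
    rcases lt_trichotomy s₁ s₂ with h | h | h
    · exact hdisj s₁ s₂ h (hpts s₂ (by omega))
    · exact absurd (by rw [h]) hne
    · exact (hdisj s₂ s₁ h (hpts s₁ (by omega))).symm
  have := hN t hpw
  rw [hcard] at this
  have : (k : ℝ) + 1 ≤ (N : ℝ) := by exact_mod_cast this
  have := Nat.lt_floor_add_one (F ε)
  linarith
end

section
/- Conversely, if α ∈ ℝ \ ℚ satisfies |α − p/q| > c/q² for all p ∈ ℤ, q ∈ ℕ with q ≥ 1 and some constant c > 0, then the point [0] ∈ ℝ/ℤ is F_c-aperiodic for the rotation T_α, where F_c(t) = c/t. -/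
/-- If `α` is badly approximable with constant `c > 0`, then `[0]` is
`F_c`-aperiodic for the rotation by `α` on `ℝ/ℤ`, where `F_c(t) = c/t`. -/
theorem faperiodic_of_badly_approximable (α : ℝ) (hα : Irrational α) (c : ℝ) (hc : 0 < c)
    (h : ∀ (p : ℤ) (q : ℕ), 1 ≤ q → c / (q : ℝ) ^ 2 < |α - p / q|) :
    ∀ i : ℕ, ∀ ε : ℝ, 0 < ε → ∀ s : ℕ, 1 ≤ s →
      dist ((fun x : AddCircle (1 : ℝ) => x + (α : AddCircle (1 : ℝ)))^[i] 0)
        ((fun x : AddCircle (1 : ℝ) => x + (α : AddCircle (1 : ℝ)))^[i + s] 0) < ε →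
      c / ε < s := by
  intro i ε hε s hs hd
  have hiter : ∀ n : ℕ, (fun x : AddCircle (1 : ℝ) => x + (α : AddCircle (1 : ℝ)))^[n] 0
      = (((n : ℝ) * α : ℝ) : AddCircle (1 : ℝ)) := by
    intro n
    induction n with
    | zero => simp
    | succ n ih =>
      rw [Function.iterate_succ_apply', ih]
      push_cast
      rw [← AddCircle.coe_add]
      ring_nf
  rw [hiter, hiter] at hd
  have hdist : dist (((i : ℝ) * α : ℝ) : AddCircle (1 : ℝ))
      ((((i + s : ℕ) : ℝ) * α : ℝ) : AddCircle (1 : ℝ)) = ‖(((s : ℝ) * α : ℝ) : AddCircle (1 : ℝ))‖ := by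
    rw [dist_eq_norm, ← AddCircle.coe_sub]
    push_cast
    ring_nf
    rw [AddCircle.coe_neg, norm_neg]
  rw [hdist, AddCircle.norm_eq] at hd
  simp only [inv_one, one_mul, mul_one] at hd
  -- hd : |s * α - round (s * α)| < ε
  have hspos : (0 : ℝ) < (s : ℝ) := by exact_mod_cast hs
  have key := h (round ((s : ℝ) * α)) s hs
  have : c / (s : ℝ) < |(s : ℝ) * α - round ((s : ℝ) * α)| := by
    have h2 : |α - (round ((s : ℝ) * α) : ℝ) / s| = |(s : ℝ) * α - round ((s : ℝ) * α)| / s := by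
      rw [eq_div_iff (ne_of_gt hspos), ← abs_of_pos hspos, ← abs_mul]
      congr 1
      field_simp
      rw [abs_of_pos hspos]
      ring
    rw [h2] at key
    calc c / (s : ℝ) = (c / (s : ℝ) ^ 2) * s := by field_simp
    _ < (|(s : ℝ) * α - round ((s : ℝ) * α)| / s) * s := by
        exact mul_lt_mul_of_pos_right key hspos
    _ = |(s : ℝ) * α - round ((s : ℝ) * α)| := by field_simp
  have hcs : c / (s : ℝ) < ε := lt_trans this hd
  rw [div_lt_iff₀ hspos] at hcs
  rw [div_lt_iff₀ hε]
  linarith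
end

section
/- The Morse–Thue sequence, extended to a biinfinite word w by w(−n) = w(n−1), is φ-aperiodic for the function φ(l) = l: whenever a subword of w of length l+1 starting at position i reappears shifted by s ≥ 1, then s > l. -/
/-- The "twisted" biinfinite word: `b` indicates whether we flip values at negative
positions. -/
private def MTV (u : ℤ → Bool) (b : Bool) (n : ℤ) : Bool :=
  xor (b && decide (n < 0)) (u n)

private lemma MTV1 (u : ℤ → Bool) (hu1 : ∀ n : ℤ, u (2*n+1) = ! u (2*n))
    (b : Bool) (n : ℤ) : MTV u b (2*n+1) = ! MTV u b (2*n) := by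
  unfold MTV
  have h : decide ((2*n+1 : ℤ) < 0) = decide ((2*n : ℤ) < 0) := by
    simp only [decide_eq_decide]; omega
  rw [h, hu1]
  cases (b && decide ((2*n : ℤ) < 0)) <;> cases u (2*n) <;> rfl

private lemma MTV2 (u : ℤ → Bool)
    (hu2 : ∀ n : ℤ, u (2*n) = xor (decide (n < 0)) (u n))
    (b : Bool) (n : ℤ) : MTV u b (2*n) = MTV u (!b) n := by
  unfold MTV
  rw [hu2]
  have h : decide ((2*n : ℤ) < 0) = decide (n < 0) := by
    simp only [decide_eq_decide]; omega
  rw [h]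
  cases b <;> cases hc : decide (n < 0) <;> cases u n <;> rfl

private lemma MTtriple (u : ℤ → Bool) (hu1 : ∀ n : ℤ, u (2*n+1) = ! u (2*n))
    (b : Bool) (k : ℤ)
    (h1 : MTV u b k = MTV u b (k+1)) (h2 : MTV u b (k+1) = MTV u b (k+2)) : False := by
  rcases Int.even_or_odd k with ⟨c, hc⟩ | ⟨c, hc⟩
  · have h := MTV1 u hu1 b c
    rw [show (2*c : ℤ) = k by omega] at h
    rw [← h1] at h
    simp at h
  · have h := MTV1 u hu1 b (c+1)
    rw [show (2*(c+1) : ℤ) = k+1 by omega] at h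
    rw [show (k+1+1 : ℤ) = k+2 by ring] at h
    rw [← h2] at h
    simp at h

private lemma MTkey (u : ℤ → Bool)
    (hu1 : ∀ n : ℤ, u (2*n+1) = ! u (2*n))
    (hu2 : ∀ n : ℤ, u (2*n) = xor (decide (n < 0)) (u n)) :
    ∀ s : ℕ, 1 ≤ s → ∀ (b : Bool) (i : ℤ),
      (∀ j : ℕ, j ≤ s → MTV u b (i + j) = MTV u b (i + s + j)) → False := by
  intro s
  induction s using Nat.strong_induction_on with
  | _ s IH =>
    intro hs b i H
    have E : ∀ n : ℤ, i ≤ n → n ≤ i + s → MTV u b n = MTV u b (n + s) := by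
      intro n h1 h2
      have hj : (((n - i).toNat : ℤ)) = n - i := Int.toNat_of_nonneg (by omega)
      have h := H (n - i).toNat (by omega)
      rw [show i + (((n - i).toNat : ℕ) : ℤ) = n by omega,
          show i + (s : ℤ) + (((n - i).toNat : ℕ) : ℤ) = n + s by omega] at h
      exact h
    rcases Nat.even_or_odd s with ⟨t, ht⟩ | ⟨r, hr⟩
    · -- s even, s = t + t with t ≥ 1
      have ht1 : 1 ≤ t := by omega
      have H' : ∀ m : ℤ, i ≤ 2*m + 1 → 2*m ≤ i + s →
          MTV u (!b) m = MTV u (!b) (m + t) := by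
        intro m h1 h2
        by_cases hc : i ≤ 2*m
        · have h := E (2*m) hc h2
          rw [show (2*m + (s : ℤ)) = 2*(m + t) by omega] at h
          rw [MTV2 u hu2 b m, MTV2 u hu2 b (m + t)] at h
          exact h
        · have h := E (2*m+1) h1 (by omega)
          rw [show (2*m + 1 + (s : ℤ)) = 2*(m + t) + 1 by omega] at h
          rw [MTV1 u hu1 b m, MTV1 u hu1 b (m + t)] at h
          rw [MTV2 u hu2 b m, MTV2 u hu2 b (m + t)] at h
          exact Bool.not_inj h
      rcases Int.even_or_odd i with ⟨k, hk⟩ | ⟨k, hk⟩ <;>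
      · refine IH t (by omega) (by omega) (!b) k ?_
        intro j hj
        have h := H' (k + j) (by omega) (by omega)
        rw [show k + (t : ℤ) + (j : ℤ) = k + j + t by ring]
        exact h
    · -- s odd, s = 2r+1
      obtain ⟨p, hp1, hp2⟩ : ∃ p : ℤ, i ≤ 2*p ∧ 2*p ≤ i + 1 := by
        rcases Int.even_or_odd i with ⟨k, hk⟩ | ⟨k, hk⟩
        · exact ⟨k, by omega, by omega⟩
        · exact ⟨k + 1, by omega, by omega⟩
      by_cases hr0 : r = 0
      · -- s = 1
        have e1 := E (2*p) hp1 (by omega)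
        rw [show (2*p + (s : ℤ)) = 2*p + 1 by omega] at e1
        have h := MTV1 u hu1 b p
        rw [← e1] at h
        simp at h
      · -- r ≥ 1
        have R1 : ∀ m : ℤ, i ≤ 2*m → 2*m ≤ i + s →
            MTV u (!b) m = ! MTV u (!b) (m + r) := by
          intro m h1 h2
          have h := E (2*m) h1 h2
          rw [show (2*m + (s : ℤ)) = 2*(m + r) + 1 by omega] at h
          rw [MTV1 u hu1 b (m + r)] at h
          rw [MTV2 u hu2 b m, MTV2 u hu2 b (m + r)] at h
          exact h
        have R2 : ∀ m : ℤ, i ≤ 2*m + 1 → 2*m + 1 ≤ i + s →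
            (! MTV u (!b) m) = MTV u (!b) (m + r + 1) := by
          intro m h1 h2
          have h := E (2*m+1) h1 h2
          rw [show (2*m + 1 + (s : ℤ)) = 2*(m + r + 1) by omega] at h
          rw [MTV1 u hu1 b m] at h
          rw [MTV2 u hu2 b m, MTV2 u hu2 b (m + r + 1)] at h
          exact h
        have A1 := R1 p hp1 (by omega)
        have A2 := R2 p (by omega) (by omega)
        have A3 := R1 (p+1) (by omega) (by omega)
        by_cases hr2 : r = 1
        · subst hr2
          have e1 : MTV u (!b) p = ! MTV u (!b) (p + 1) := by
            rw [A1]; norm_num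
          have e2 : (! MTV u (!b) p) = MTV u (!b) (p + 1 + 1) := by
            rw [A2]; norm_num
          have e3 : MTV u (!b) (p+1) = ! MTV u (!b) (p + 1 + 1) := by
            rw [A3]; norm_num
          cases hb1 : MTV u (!b) p <;> cases hb2 : MTV u (!b) (p+1) <;>
            cases hb3 : MTV u (!b) (p+1+1) <;> simp_all
        · have A4 := R2 (p+1) (by omega) (by omega)
          have t1 : MTV u (!b) (p + r) = MTV u (!b) (p + r + 1) := by
            rw [← A2, A1, Bool.not_not]
          rw [show (p + 1 + (r : ℤ)) = p + r + 1 by ring] at A3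
          rw [show (p + 1 + (r : ℤ) + 1) = p + r + 2 by ring] at A4
          have t2 : MTV u (!b) (p + r + 1) = MTV u (!b) (p + r + 2) := by
            rw [← A4, A3, Bool.not_not]
          exact MTtriple u hu1 (!b) (p + r) t1 t2

private lemma MTcount_even (n : ℕ) :
    (Nat.digits 2 (2*n)).count 1 % 2 = (Nat.digits 2 n).count 1 % 2 := by
  rcases Nat.eq_zero_or_pos n with rfl | hn
  · rfl
  · rw [Nat.digits_def' (by norm_num : 1 < 2) (by omega)]
    have h1 : 2 * n % 2 = 0 := Nat.mul_mod_right 2 n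
    have h2 : 2 * n / 2 = n := by omega
    rw [h1, h2]
    simp [List.count_cons]

private lemma MTcount_odd (n : ℕ) :
    (Nat.digits 2 (2*n+1)).count 1 % 2 = ((Nat.digits 2 n).count 1 + 1) % 2 := by
  rw [Nat.digits_def' (by norm_num : 1 < 2) (by omega)]
  have h1 : (2*n+1) % 2 = 1 := by omega
  have h2 : (2*n+1) / 2 = n := by omega
  rw [h1, h2]
  simp [List.count_cons]

/-- The Morse–Thue sequence (t n = parity of the number of 1's in the
binary expansion of n), extended to a biinfinite word by `w(−n) = w(n−1)`, is
φ-aperiodic for `φ(l) = l`: any repetition of a subword of length `l+1` at shift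
`s ≥ 1` forces `s > l`. -/
theorem morseThue_phiaperiodic (w : ℤ → ℕ)
    (hpos : ∀ n : ℕ, w (n : ℤ) = ((Nat.digits 2 n).count 1) % 2)
    (hneg : ∀ n : ℕ, 1 ≤ n → w (-(n : ℤ)) = w ((n : ℤ) - 1)) :
    ∀ (i : ℤ) (l s : ℕ), 1 ≤ s →
      (∀ j : ℕ, j ≤ l → w (i + j) = w (i + s + j)) → l < s := by
  intro i l s hs H
  by_contra hlt
  push_neg at hlt
  -- hlt : s ≤ l
  set u : ℤ → Bool := fun n => w n == 1 with hu
  have hneg' : ∀ n : ℕ, w (-(n : ℤ) - 1) = w (n : ℤ) := by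
    intro n
    have h := hneg (n+1) (by omega)
    rw [show -((↑(n+1) : ℤ)) = -(n : ℤ) - 1 by push_cast; ring,
        show ((↑(n+1) : ℤ)) - 1 = (n : ℤ) by push_cast; ring] at h
    exact h
  have hu1 : ∀ n : ℤ, u (2*n+1) = ! u (2*n) := by
    intro n
    cases n with
    | ofNat m =>
      rw [show (Int.ofNat m) = (m : ℤ) from rfl]
      rw [show (2 * (m : ℤ) + 1) = ((2*m+1 : ℕ) : ℤ) by push_cast; ring,
          show (2 * (m : ℤ)) = ((2*m : ℕ) : ℤ) by push_cast; ring]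
      simp only [hu]
      rw [hpos, hpos, MTcount_odd, MTcount_even]
      rcases Nat.mod_two_eq_zero_or_one ((Nat.digits 2 m).count 1) with h | h <;>
        simp [Nat.add_mod, h]
    | negSucc m =>
      rw [Int.negSucc_eq]
      rw [show (2 * (-((m : ℤ) + 1)) + 1) = -((2*m : ℕ) : ℤ) - 1 by push_cast; ring,
          show (2 * (-((m : ℤ) + 1))) = -((2*m+1 : ℕ) : ℤ) - 1 by push_cast; ring]
      simp only [hu]
      rw [hneg', hneg', hpos, hpos, MTcount_odd, MTcount_even]
      rcases Nat.mod_two_eq_zero_or_one ((Nat.digits 2 m).count 1) with h | h <;>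
        simp [Nat.add_mod, h]
  have hu2 : ∀ n : ℤ, u (2*n) = xor (decide (n < 0)) (u n) := by
    intro n
    cases n with
    | ofNat m =>
      rw [show (Int.ofNat m) = (m : ℤ) from rfl]
      rw [show (2 * (m : ℤ)) = ((2*m : ℕ) : ℤ) by push_cast; ring]
      have hd : decide ((m : ℤ) < 0) = false := by
        simp
      rw [hd]
      simp only [hu, Bool.false_xor]
      rw [hpos, hpos, MTcount_even]
    | negSucc m =>
      rw [Int.negSucc_eq]
      rw [show (2 * (-((m : ℤ) + 1))) = -((2*m+1 : ℕ) : ℤ) - 1 by push_cast; ring,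
          show (-((m : ℤ) + 1)) = -((m : ℕ) : ℤ) - 1 by ring]
      have hd : decide ((-((m : ℕ) : ℤ) - 1) < 0) = true := decide_eq_true (by omega)
      rw [hd]
      simp only [hu, Bool.true_xor]
      rw [hneg', hneg', hpos, hpos, MTcount_odd]
      rcases Nat.mod_two_eq_zero_or_one ((Nat.digits 2 m).count 1) with h | h <;>
        simp [Nat.add_mod, h]
  have H2 : ∀ j : ℕ, j ≤ s → MTV u false (i + j) = MTV u false (i + s + j) := by
    intro j hj
    simp only [MTV, Bool.false_and, Bool.false_xor]
    simp only [hu]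
    rw [H j (le_trans hj hlt)]
  exact MTkey u hu1 hu2 s hs false i H2
end

section
/- Let φ : ℕ → [0,∞) be non-decreasing and unbounded with right-inverse ℓ(s) = min{j : φ(j) ≥ s}, and equip Σ = A^ℤ with the metric d̄(w, w̄) = 2^{−max{i : w(j)=w̄(j) for |j|≤i}}. If w ∈ Σ is φ-aperiodic, then for every periodic word w̄ of period s ≥ 1 and every i ∈ ℤ, d̄(T^i w, w̄) > 2^{−(s+ℓ(s))/2}. -/
open Classical

/-- The metric `d̄(w,w̄) = 2^{-a(w,w̄)}` on `A^ℤ`, where `a(w,w̄)` is the largest `i`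
such that `w` and `w̄` agree on all `|j| ≤ i`. -/
noncomputable def dbar {A : Type*} (w w' : ℤ → A) : ℝ :=
  if w = w' then 0
  else (2 : ℝ) ^ ((1 : ℤ) - (↑(sInf {n : ℕ | ∃ j : ℤ, |j| ≤ (n : ℤ) ∧ w j ≠ w' j}) : ℤ))

/-- If `w` is φ-aperiodic, then for every periodic word `w̄` of period
`s ≥ 1` and every `i ∈ ℤ`, `d̄(T^i w, w̄) > 2^{−(s+ℓ(s))/2}`, where
`ℓ(s) = min{j : φ(j) ≥ s}`. -/
theorem phiaperiodic_far_from_periodic {A : Type*} (φ : ℕ → ℝ) (hmono : Monotone φ)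
    (hnonneg : ∀ l : ℕ, 0 ≤ φ l) (hunb : ∀ C : ℝ, ∃ j : ℕ, C < φ j)
    (w : ℤ → A)
    (hw : ∀ (i : ℤ) (l s : ℕ), 1 ≤ s →
      (∀ j : ℕ, j ≤ l → w (i + j) = w (i + s + j)) → φ l < s)
    (wbar : ℤ → A) (s : ℕ) (hs : 1 ≤ s) (hper : ∀ i : ℤ, wbar i = wbar (i + s)) :
    ∀ i : ℤ,
      (2 : ℝ) ^ (-(((s : ℝ) + (sInf {j : ℕ | (s : ℝ) ≤ φ j} : ℕ)) / 2)) <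
        dbar (fun j => w (j + i)) wbar := by
  intro i
  set L := sInf {j : ℕ | (s : ℝ) ≤ φ j} with hLdef
  have hLne : {j : ℕ | (s : ℝ) ≤ φ j}.Nonempty := by
    obtain ⟨j, hj⟩ := hunb s
    exact ⟨j, hj.le⟩
  have hLmem : (s : ℝ) ≤ φ L := Nat.sInf_mem hLne
  have hne : (fun j => w (j + i)) ≠ wbar := by
    intro h
    have hall : ∀ x : ℤ, w (x + i) = wbar x := fun x => congrFun h x
    obtain ⟨j, hj⟩ := hunb s
    have := hw i j s hs (fun k _ => by
      have e1 : w (i + (k : ℤ)) = wbar k := by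
        rw [show i + (k : ℤ) = (k : ℤ) + i by ring]; exact hall k
      have e2 : w (i + (s : ℤ) + k) = wbar ((k : ℤ) + s) := by
        rw [show i + (s : ℤ) + k = ((k : ℤ) + s) + i by ring]; exact hall _
      rw [e1, e2, hper k])
    linarith [hmono (le_refl j)]
  rw [dbar, if_neg hne]
  set S := {n : ℕ | ∃ j : ℤ, |j| ≤ (n : ℤ) ∧ (fun j => w (j + i)) j ≠ wbar j} with hSdef
  set a := sInf S with hadef
  have hagree : ∀ j : ℤ, |j| < (a : ℤ) → w (j + i) = wbar j := by
    intro j hj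
    by_contra hcon
    have : j.natAbs ∈ S := ⟨j, by rw [Int.abs_eq_natAbs], hcon⟩
    have h2 := Nat.sInf_le this
    rw [Int.abs_eq_natAbs] at hj
    omega
  have key : 2 * a ≤ s + L + 1 := by
    by_contra hcon
    push_neg at hcon
    have ha2 : s + L + 2 ≤ 2 * a := hcon
    set l := 2 * a - 2 - s with hldef
    have hLl : L ≤ l := by omega
    have hperiod : ∀ j : ℕ, j ≤ l → w (i - ((a : ℤ) - 1) + j) = w (i - ((a : ℤ) - 1) + s + j) := by
      intro j hj
      have hj' : (j : ℤ) ≤ 2 * (a : ℤ) - 2 - s := by omega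
      have e1 : w (i - ((a : ℤ) - 1) + j) = wbar (-((a : ℤ) - 1) + j) := by
        rw [show i - ((a : ℤ) - 1) + j = (-((a : ℤ) - 1) + j) + i by ring]
        exact hagree _ (by rw [abs_lt]; omega)
      have e2 : w (i - ((a : ℤ) - 1) + s + j) = wbar (-((a : ℤ) - 1) + j + s) := by
        rw [show i - ((a : ℤ) - 1) + s + j = (-((a : ℤ) - 1) + j + s) + i by ring]
        exact hagree _ (by rw [abs_lt]; omega)
      rw [e1, e2, hper (-((a : ℤ) - 1) + j)]
    have := hw (i - ((a : ℤ) - 1)) l s hs hperiod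
    have : (s : ℝ) ≤ φ l := le_trans hLmem (hmono hLl)
    linarith
  have hcast : ((2 : ℝ) ^ ((1 : ℤ) - (a : ℤ))) = (2 : ℝ) ^ ((((1 : ℤ) - (a : ℤ)) : ℤ) : ℝ) :=
    (Real.rpow_intCast 2 _).symm
  rw [hcast]
  rw [Real.rpow_lt_rpow_left_iff one_lt_two]
  push_cast
  have : (a : ℝ) ≤ ((s : ℝ) + L + 1) / 2 := by
    have : (2 : ℝ) * a ≤ (s : ℝ) + L + 1 := by exact_mod_cast key
    linarith
  linarith
end

section
/- With the setup as before, if a word w ∈ Σ satisfies d̄(T^i w, w̄) > 2^{−(s+ℓ(s)−1)/2} for every periodic word w̄ of period s ≥ 1 and every i ∈ ℤ, then w is φ-aperiodic. -/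
open Classical

/-- If `d̄(T^i w, w̄) > 2^{−(s+ℓ(s)−1)/2}` for every periodic word `w̄`
of period `s ≥ 1` and every `i ∈ ℤ`, then `w` is φ-aperiodic. -/
theorem phiaperiodic_of_far_from_periodic {A : Type*} (φ : ℕ → ℝ) (hmono : Monotone φ)
    (hnonneg : ∀ l : ℕ, 0 ≤ φ l) (hunb : ∀ C : ℝ, ∃ j : ℕ, C < φ j)
    (w : ℤ → A)
    (hw : ∀ s : ℕ, 1 ≤ s → ∀ wbar : ℤ → A, (∀ i : ℤ, wbar i = wbar (i + s)) →
      ∀ i : ℤ,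
        (2 : ℝ) ^ (-(((s : ℝ) + (sInf {j : ℕ | (s : ℝ) ≤ φ j} : ℕ) - 1) / 2)) <
          dbar (fun j => w (j + i)) wbar) :
    ∀ (i : ℤ) (l s : ℕ), 1 ≤ s →
      (∀ j : ℕ, j ≤ l → w (i + j) = w (i + s + j)) → φ l < s := by
  intro i l s hs hagree
  by_contra hlt
  push_neg at hlt
  set ℓ : ℕ := sInf {j : ℕ | (s : ℝ) ≤ φ j} with hℓdef
  have hℓ_le : ℓ ≤ l := Nat.sInf_le hlt
  set m : ℕ := (l + s) / 2 with hm
  -- periodicity of w on the window [i, i + l + s]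
  have key : ∀ t : ℕ, t ≤ l + s → w (i + t) = w (i + (t % s : ℕ)) := by
    intro t
    induction t using Nat.strong_induction_on with
    | _ t ih =>
      intro ht
      rcases lt_or_ge t s with h | h
      · rw [Nat.mod_eq_of_lt h]
      · have h1 := hagree (t - s) (by omega)
        have h3 := ih (t - s) (by omega) (by omega)
        have h4 : (t - s) % s = t % s := (Nat.mod_eq_sub_mod h).symm
        have h2 : i + (s : ℤ) + ((t - s : ℕ) : ℤ) = i + (t : ℤ) := by omega
        calc w (i + (t : ℤ)) = w (i + (s : ℤ) + ((t - s : ℕ) : ℤ)) := by rw [h2]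
          _ = w (i + ((t - s : ℕ) : ℤ)) := h1.symm
          _ = w (i + (((t - s) % s : ℕ) : ℤ)) := h3
          _ = w (i + ((t % s : ℕ) : ℤ)) := by rw [h4]
  -- the periodic comparison word
  set wbar : ℤ → A := fun j => w (i + (j + m) % (s : ℤ)) with hwbar
  have hper : ∀ j : ℤ, wbar j = wbar (j + s) := by
    intro j
    simp only [hwbar]
    congr 1
    have : j + (s : ℤ) + m = (j + m) + 1 * s := by ring
    rw [this, Int.add_mul_emod_self_right]
  have hspos : (0 : ℤ) < (s : ℤ) := by exact_mod_cast hs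
  -- agreement of the shifted word with wbar on |j| ≤ m
  have hag : ∀ j : ℤ, |j| ≤ (m : ℤ) → w (j + (i + m)) = wbar j := by
    intro j hj
    have hj1 : 0 ≤ j + m := by
      have := abs_le.mp hj; omega
    have hj2 : j + m ≤ l + s := by
      have := abs_le.mp hj
      have : j + (m : ℤ) ≤ 2 * m := by omega
      have hm2 : 2 * (m : ℤ) ≤ l + s := by
        have : 2 * ((l + s) / 2) ≤ l + s := by omega
        exact_mod_cast this
      omega
    set t : ℕ := (j + m).toNat with htdef
    have htc : (t : ℤ) = j + m := Int.toNat_of_nonneg hj1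
    have htle : t ≤ l + s := by omega
    have := key t htle
    have e1 : j + (i + (m : ℤ)) = i + (t : ℤ) := by omega
    have e2 : ((t % s : ℕ) : ℤ) = (j + m) % (s : ℤ) := by
      push_cast
      rw [htc]
    rw [e1, this, hwbar]
    simp only
    rw [e2]
  have h := hw s hs wbar hper (i + m)
  set f : ℤ → A := fun j => w (j + (i + m)) with hf
  have hpos : (0 : ℝ) < (2 : ℝ) ^ (-(((s : ℝ) + (ℓ : ℕ) - 1) / 2)) :=
    Real.rpow_pos_of_pos (by norm_num) _
  unfold dbar at h
  by_cases heq : f = wbar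
  · rw [if_pos heq] at h
    exact absurd h (not_lt.mpr hpos.le)
  · rw [if_neg heq] at h
    set S : Set ℕ := {n : ℕ | ∃ j : ℤ, |j| ≤ (n : ℤ) ∧ f j ≠ wbar j} with hS
    have hSne : S.Nonempty := by
      have : ∃ j : ℤ, f j ≠ wbar j := by
        by_contra hc
        push_neg at hc
        exact heq (funext hc)
      obtain ⟨j, hjne⟩ := this
      exact ⟨j.natAbs, j, by rw [Int.abs_eq_natAbs], hjne⟩
    have hmem := Nat.sInf_mem hSne
    obtain ⟨j, hjle, hjne⟩ := hmem
    have hN : m + 1 ≤ sInf S := by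
      by_contra hc
      push_neg at hc
      have : |j| ≤ (m : ℤ) := by omega
      exact hjne (hag j this)
    -- dbar bound: 2^(1 - sInf S) ≤ 2^(-m)
    have hz : (2 : ℝ) ^ ((1 : ℤ) - ((sInf S : ℕ) : ℤ)) ≤ (2 : ℝ) ^ (-(m : ℤ)) := by
      apply zpow_le_zpow_right₀ (by norm_num)
      omega
    have hlt2 : (2 : ℝ) ^ (-(((s : ℝ) + (ℓ : ℕ) - 1) / 2)) < (2 : ℝ) ^ (-(m : ℤ)) :=
      lt_of_lt_of_le h hz
    have hrw : ((2 : ℝ) ^ (-(m : ℤ)) : ℝ) = (2 : ℝ) ^ (-(m : ℝ) : ℝ) := by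
      rw [← Real.rpow_intCast]
      norm_num
    rw [hrw] at hlt2
    have hab : -(((s : ℝ) + (ℓ : ℕ) - 1) / 2) < -(m : ℝ) :=
      (Real.rpow_lt_rpow_left_iff (by norm_num)).mp hlt2
    have hℓr : ((ℓ : ℕ) : ℝ) ≤ (l : ℝ) := by exact_mod_cast hℓ_le
    have hfin : (2 * m + 1 : ℝ) < (s : ℝ) + l := by linarith
    have hfin' : 2 * m + 1 < s + l := by exact_mod_cast hfin
    omega
end

section
/- Let A be an alphabet of k symbols and φ : ℕ → [0,∞) non-decreasing unbounded with right-inverse ℓ. Define W^g(m) ⊆ A^{\{1,…,m\}} to be the set of words w of length m such that for all i, s ≥ 1 and l ∈ ℕ with i + s + l ≤ m, the equality w(i+j) = w(i+s+j) for all 0 ≤ j ≤ l implies s > φ(l). Then |W^g(m+1)| ≥ (k − ⌊φ(0)⌋)|W^g(m)| − Σ_{j=1}^{m} (⌊φ(j)⌋ − ⌊φ(j−1)⌋)|W^g(m−j)|. -/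
/-- A finite word `v` of length `m` is good (φ-aperiodic) if whenever a subword of
length `l+1` starting at position `i` reappears at shift `s ≥ 1` (inside the word),
then `s > φ(l)`. -/
def GoodWord {A : Type*} (φ : ℕ → ℝ) (m : ℕ) (v : Fin m → A) : Prop :=
  ∀ i s l : ℕ, 1 ≤ s → ∀ h : i + s + l < m,
    (∀ j : ℕ, ∀ hj : j ≤ l,
      v ⟨i + j, by omega⟩ = v ⟨i + s + j, by omega⟩) → φ l < s

open Finset
lemma fin_congr' {A : Type*} {n a b : ℕ} (w : Fin n → A) (ha : a < n) (hb : b < n)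
    (h : a = b) : w ⟨a, ha⟩ = w ⟨b, hb⟩ := by subst h; rfl

lemma goodword_restrict {A : Type*} (φ : ℕ → ℝ) {n n' : ℕ} (h : n' ≤ n) {v : Fin n → A}
    (hv : GoodWord φ n v) : GoodWord φ n' (fun i => v (Fin.castLE h i)) := by
  intro i s l hs hlt heq
  refine hv i s l hs (by omega) ?_
  intro j hj
  have := heq j hj
  simpa [Fin.castLE] using this

lemma ext_card {A : Type*} [Fintype A] (φ : ℕ → ℝ) (m : ℕ) :
    Nat.card {w : Fin (m+1) → A // GoodWord φ m (fun i => w (Fin.castLE (Nat.le_succ m) i))}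
      = Nat.card {v : Fin m → A // GoodWord φ m v} * Fintype.card A := by
  rw [← Nat.card_eq_fintype_card (α := A), ← Nat.card_prod]
  apply Nat.card_congr
  refine { toFun := fun w => (⟨fun i => w.1 (Fin.castLE (Nat.le_succ m) i), w.2⟩, w.1 (Fin.last m)),
           invFun := fun p => ⟨Fin.snoc p.1.1 p.2, ?_⟩,
           left_inv := ?_, right_inv := ?_ }
  · have : (fun i => Fin.snoc (α := fun _ => A) p.1.1 p.2 (Fin.castLE (Nat.le_succ m) i)) = p.1.1 := by
      funext i
      exact Fin.snoc_castSucc (α := fun _ => A) p.2 p.1.1 i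
    rw [this]; exact p.1.2
  · intro w
    apply Subtype.ext
    exact Fin.snoc_init_self (α := fun _ => A) w.1
  · intro p
    ext i
    · exact Fin.snoc_castSucc (α := fun _ => A) p.2 p.1.1 i
    · exact Fin.snoc_last (α := fun _ => A) p.2 p.1.1

lemma main_nat {A : Type*} [Fintype A] (φ : ℕ → ℝ) (hmono : Monotone φ)
    (hnonneg : ∀ l : ℕ, 0 ≤ φ l) (hunb : ∀ C : ℝ, ∃ j : ℕ, C < φ j) (m : ℕ) :
    Fintype.card A * Nat.card {v : Fin m → A // GoodWord φ m v}
      ≤ Nat.card {v : Fin (m+1) → A // GoodWord φ (m+1) v}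
        + ⌊φ 0⌋₊ * Nat.card {v : Fin m → A // GoodWord φ m v}
        + ∑ j ∈ Finset.Icc 1 m,
            (⌊φ j⌋₊ - ⌊φ (j-1)⌋₊) * Nat.card {v : Fin (m-j) → A // GoodWord φ (m-j) v} := by
  classical
  have hex : ∀ s : ℕ, ∃ l, (s:ℝ) ≤ φ l := fun s => by
    obtain ⟨j, hj⟩ := hunb s; exact ⟨j, hj.le⟩
  set ell : ℕ → ℕ := fun s => Nat.find (hex s) with hell_def
  have hell1 : ∀ s : ℕ, (s:ℝ) ≤ φ (ell s) := fun s => Nat.find_spec (hex s)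
  have hell2 : ∀ s l : ℕ, (s:ℝ) ≤ φ l → ell s ≤ l := fun s l h => Nat.find_min' (hex s) h
  have hell3 : ∀ s j, j < ell s → φ j < s := by
    intro s j hj
    have := Nat.find_min (hex s) hj
    exact lt_of_not_ge this
  set M := ⌊φ m⌋₊ with hM
  have hNc : ∀ n, Nat.card {v : Fin n → A // GoodWord φ n v}
      = (univ.filter (fun v : Fin n → A => GoodWord φ n v)).card := by
    intro n
    simp [Nat.card_eq_fintype_card, Fintype.card_subtype]
  set pre : (Fin (m+1) → A) → (Fin m → A) :=
    fun w i => w (Fin.castLE (Nat.le_succ m) i) with hpre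
  set Bad : Finset (Fin (m+1) → A) :=
    univ.filter (fun w => GoodWord φ m (pre w) ∧ ¬ GoodWord φ (m+1) w) with hBad
  -- Step A
  have hA : Fintype.card A * Nat.card {v : Fin m → A // GoodWord φ m v}
      = (univ.filter (fun w : Fin (m+1) → A => GoodWord φ m (pre w))).card := by
    rw [mul_comm, ← ext_card φ m, hpre]
    simp [Nat.card_eq_fintype_card, Fintype.card_subtype]
  -- Step C: partition
  have hsplit : (univ.filter (fun w : Fin (m+1) → A => GoodWord φ m (pre w))).card
      = Nat.card {v : Fin (m+1) → A // GoodWord φ (m+1) v} + Bad.card := by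
    rw [hNc (m+1)]
    rw [← Finset.card_filter_add_card_filter_not
      (s := univ.filter (fun w : Fin (m+1) → A => GoodWord φ m (pre w)))
      (p := fun w => GoodWord φ (m+1) w)]
    congr 1
    · congr 1
      rw [Finset.filter_filter]
      apply Finset.filter_congr
      intro w _
      constructor
      · exact fun h => h.2
      · exact fun h => ⟨goodword_restrict φ (Nat.le_succ m) h, h⟩
    · rw [hBad, Finset.filter_filter]

  -- the subword-shift structure of bad words
  set Es : ℕ → Finset (Fin (m+1) → A) := fun s =>
    univ.filter (fun w => GoodWord φ m (pre w) ∧ 1 ≤ s ∧ s + ell s ≤ m ∧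
      ∀ j : ℕ, ∀ hj : j ≤ ell s, ∀ hm2 : s + ell s ≤ m,
        w ⟨m - s - ell s + j, by omega⟩ = w ⟨m - ell s + j, by omega⟩) with hEs_def
  have hsub : Bad ⊆ (Icc 1 M).biUnion Es := by
    intro w hw
    simp only [hBad, mem_filter, mem_univ, true_and] at hw
    obtain ⟨hgood, hbad⟩ := hw
    rw [GoodWord] at hbad
    push_neg at hbad
    obtain ⟨i, s, l, hs, hlt, heq, hsl⟩ := hbad
    have hisl : i + s + l = m := by
      by_contra hne
      have hlt' : i + s + l < m := by omega
      have hcon := hgood i s l hs hlt' ?_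
      · exact absurd hcon (not_lt.mpr hsl)
      · intro j hj
        have := heq j hj
        simpa [hpre, Fin.castLE] using this
    have hjl : ell s ≤ l := hell2 s l hsl
    have hsM : s ∈ Icc 1 M := by
      rw [mem_Icc]
      exact ⟨hs, Nat.le_floor (le_trans hsl (hmono (by omega : l ≤ m)))⟩
    rw [mem_biUnion]
    refine ⟨s, hsM, ?_⟩
    simp only [hEs_def, mem_filter, mem_univ, true_and]
    refine ⟨hgood, hs, by omega, ?_⟩
    intro j hj hm2
    have key : ∀ a b (ha : a < m+1) (hb : b < m+1), a = i + (l - ell s + j) →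
        b = i + s + (l - ell s + j) → w ⟨a, ha⟩ = w ⟨b, hb⟩ := by
      rintro a b ha hb rfl rfl
      exact heq _ (by omega)
    exact key _ _ _ _ (by omega) (by omega)
  have hEcard : ∀ s : ℕ, (Es s).card ≤
      (univ.filter (fun v : Fin (m - ell s) → A => GoodWord φ (m - ell s) v)).card := by
    intro s
    apply Finset.card_le_card_of_injOn
      (fun w => fun i : Fin (m - ell s) => w (Fin.castLE (by omega : m - ell s ≤ m + 1) i))
    · intro w hw
      simp only [hEs_def, mem_coe, mem_filter, mem_univ, true_and] at hw
      simp only [mem_coe, mem_filter, mem_univ, true_and]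
      exact goodword_restrict φ (by omega : m - ell s ≤ m) hw.1
    · intro w hw w' hw' htake
      simp only [hEs_def, mem_coe, mem_filter, mem_univ, true_and] at hw hw'
      obtain ⟨-, hs1, hs2, hper⟩ := hw
      obtain ⟨-, -, -, hper'⟩ := hw'
      funext p
      suffices hsuff : ∀ t, ∀ ht : t < m + 1, w ⟨t, ht⟩ = w' ⟨t, ht⟩ from hsuff p.1 p.2
      intro t
      induction t using Nat.strong_induction_on with
      | _ t ih =>
        intro ht
        by_cases hc : t < m - ell s
        · have := congrFun htake ⟨t, hc⟩
          simpa [Fin.castLE] using this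
        · have h1 := hper (t - (m - ell s)) (by omega) hs2
          have h2 := hper' (t - (m - ell s)) (by omega) hs2
          have ha : m - ell s + (t - (m - ell s)) = t := by omega
          have hb : m - s - ell s + (t - (m - ell s)) = t - s := by omega
          have e1 : w ⟨t, ht⟩ = w ⟨t - s, by omega⟩ := by
            calc w ⟨t, ht⟩ = w ⟨m - ell s + (t - (m - ell s)), by omega⟩ :=
                  fin_congr' w _ _ ha.symm
              _ = w ⟨m - s - ell s + (t - (m - ell s)), by omega⟩ := h1.symm
              _ = w ⟨t - s, by omega⟩ := fin_congr' w _ _ hb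
          have e2 : w' ⟨t, ht⟩ = w' ⟨t - s, by omega⟩ := by
            calc w' ⟨t, ht⟩ = w' ⟨m - ell s + (t - (m - ell s)), by omega⟩ :=
                  fin_congr' w' _ _ ha.symm
              _ = w' ⟨m - s - ell s + (t - (m - ell s)), by omega⟩ := h2.symm
              _ = w' ⟨t - s, by omega⟩ := fin_congr' w' _ _ hb
          rw [e1, e2]
          exact ih (t - s) (by omega) _
  have hBadle : Bad.card ≤ ∑ s ∈ Icc 1 M,
      (univ.filter (fun v : Fin (m - ell s) → A => GoodWord φ (m - ell s) v)).card :=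
    calc Bad.card ≤ ((Icc 1 M).biUnion Es).card := Finset.card_le_card hsub
      _ ≤ ∑ s ∈ Icc 1 M, (Es s).card := Finset.card_biUnion_le
      _ ≤ _ := Finset.sum_le_sum (fun s _ => hEcard s)
  -- regroup the sum over shifts by the value of ell
  have hmaps : ∀ s ∈ Icc 1 M, ell s ∈ range (m+1) := by
    intro s hs
    rw [mem_range]
    rw [mem_Icc] at hs
    have h1 : (s:ℝ) ≤ φ m :=
      le_trans (le_trans (Nat.cast_le.mpr hs.2) (Nat.cast_le.mpr le_rfl))
        (Nat.floor_le (hnonneg m))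
    have := hell2 s m h1
    omega
  have hfib : ∑ s ∈ Icc 1 M,
      (univ.filter (fun v : Fin (m - ell s) → A => GoodWord φ (m - ell s) v)).card
      = ∑ j ∈ range (m+1), ((Icc 1 M).filter (fun s => ell s = j)).card *
          (univ.filter (fun v : Fin (m - j) → A => GoodWord φ (m - j) v)).card := by
    rw [← Finset.sum_fiberwise_of_maps_to hmaps
      (fun s => (univ.filter (fun v : Fin (m - ell s) → A => GoodWord φ (m - ell s) v)).card)]
    apply Finset.sum_congr rfl
    intro j hj
    rw [Finset.sum_congr rfl (g := fun s =>
        (univ.filter (fun v : Fin (m - j) → A => GoodWord φ (m - j) v)).card)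
      (fun s hs => by rw [(mem_filter.mp hs).2])]
    rw [Finset.sum_const, smul_eq_mul]
  have hcard0 : ((Icc 1 M).filter (fun s => ell s = 0)).card ≤ ⌊φ 0⌋₊ := by
    have hsub0 : (Icc 1 M).filter (fun s => ell s = 0) ⊆ Icc 1 ⌊φ 0⌋₊ := by
      intro s hs
      simp only [mem_filter, mem_Icc] at hs ⊢
      refine ⟨hs.1.1, Nat.le_floor ?_⟩
      have := hell1 s
      rw [hs.2] at this
      exact this
    calc ((Icc 1 M).filter (fun s => ell s = 0)).card ≤ (Icc 1 ⌊φ 0⌋₊).card :=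
          Finset.card_le_card hsub0
      _ = ⌊φ 0⌋₊ := by rw [Nat.card_Icc]; omega
  have hcardj : ∀ j : ℕ, 1 ≤ j →
      ((Icc 1 M).filter (fun s => ell s = j)).card ≤ ⌊φ j⌋₊ - ⌊φ (j-1)⌋₊ := by
    intro j hj1
    have hsubj : (Icc 1 M).filter (fun s => ell s = j) ⊆ Icc (⌊φ (j-1)⌋₊ + 1) ⌊φ j⌋₊ := by
      intro s hs
      simp only [mem_filter, mem_Icc] at hs ⊢
      obtain ⟨⟨hs1, hs2⟩, hse⟩ := hs
      constructor
      · have hlt := hell3 s (j-1) (by omega)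
        have hne : ¬ (s ≤ ⌊φ (j-1)⌋₊) := by
          intro hle
          have : (s:ℝ) ≤ φ (j-1) :=
            le_trans (Nat.cast_le.mpr hle) (Nat.floor_le (hnonneg _))
          exact absurd hlt (not_lt.mpr this)
        omega
      · have := hell1 s
        rw [hse] at this
        exact Nat.le_floor this
    calc ((Icc 1 M).filter (fun s => ell s = j)).card
        ≤ (Icc (⌊φ (j-1)⌋₊ + 1) ⌊φ j⌋₊).card := Finset.card_le_card hsubj
      _ = ⌊φ j⌋₊ - ⌊φ (j-1)⌋₊ := by rw [Nat.card_Icc]; omega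
  have hEfin : ∑ s ∈ Icc 1 M,
      (univ.filter (fun v : Fin (m - ell s) → A => GoodWord φ (m - ell s) v)).card
      ≤ ⌊φ 0⌋₊ * (univ.filter (fun v : Fin m → A => GoodWord φ m v)).card
        + ∑ j ∈ Icc 1 m, (⌊φ j⌋₊ - ⌊φ (j-1)⌋₊) *
            (univ.filter (fun v : Fin (m - j) → A => GoodWord φ (m - j) v)).card := by
    rw [hfib]
    have hstep : ∑ j ∈ range (m+1), ((Icc 1 M).filter (fun s => ell s = j)).card *
          (univ.filter (fun v : Fin (m - j) → A => GoodWord φ (m - j) v)).card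
        ≤ ∑ j ∈ range (m+1), (if j = 0 then ⌊φ 0⌋₊ else ⌊φ j⌋₊ - ⌊φ (j-1)⌋₊) *
            (univ.filter (fun v : Fin (m - j) → A => GoodWord φ (m - j) v)).card := by
      apply Finset.sum_le_sum
      intro j _
      apply Nat.mul_le_mul_right
      by_cases hj : j = 0
      · rw [hj, if_pos rfl]; exact hj ▸ hcard0
      · rw [if_neg hj]; exact hcardj j (by omega)
    refine le_trans hstep (le_of_eq ?_)
    have hins : range (m+1) = insert 0 (Icc 1 m) := by
      ext x
      simp only [mem_range, mem_insert, mem_Icc]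
      omega
    rw [hins, Finset.sum_insert (by simp)]
    refine congrArg₂ (· + ·) (by simp) (Finset.sum_congr rfl fun j hj => ?_)
    rw [mem_Icc] at hj
    rw [if_neg (by omega)]
  -- assemble
  simp only [hNc]
  rw [hNc m, hA, hsplit, hNc (m+1)] at *
  have hfinal := hBadle.trans hEfin
  linarith

/-- The counting inequality for the number of good words:
`|W^g(m+1)| ≥ (k − ⌊φ(0)⌋)|W^g(m)| − Σ_{j=1}^m (⌊φ(j)⌋ − ⌊φ(j−1)⌋)|W^g(m−j)|`. -/
theorem good_words_count_ineq {A : Type*} [Fintype A] (k : ℕ) (hk : Fintype.card A = k)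
    (φ : ℕ → ℝ) (hmono : Monotone φ) (hnonneg : ∀ l : ℕ, 0 ≤ φ l)
    (hunb : ∀ C : ℝ, ∃ j : ℕ, C < φ j) (m : ℕ) :
    ((k : ℤ) - ⌊φ 0⌋) * (Nat.card {v : Fin m → A // GoodWord φ m v} : ℤ)
      - ∑ j ∈ Finset.Icc 1 m, (⌊φ j⌋ - ⌊φ (j - 1)⌋) *
          (Nat.card {v : Fin (m - j) → A // GoodWord φ (m - j) v} : ℤ)
      ≤ (Nat.card {v : Fin (m + 1) → A // GoodWord φ (m + 1) v} : ℤ) := by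
  have h := main_nat (A := A) φ hmono hnonneg hunb m
  rw [hk] at h
  have hfl : ∀ j : ℕ, ((⌊φ j⌋₊ : ℤ)) = ⌊φ j⌋ := by
    intro j
    rw [← Int.floor_toNat, Int.toNat_of_nonneg (Int.floor_nonneg.mpr (hnonneg j))]
  have hz := (Nat.cast_le (α := ℤ)).mpr h
  push_cast at hz
  have hsum : ∑ j ∈ Finset.Icc 1 m, ((⌊φ j⌋₊ - ⌊φ (j-1)⌋₊ : ℕ) : ℤ) *
        (Nat.card {v : Fin (m - j) → A // GoodWord φ (m - j) v} : ℤ)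
      = ∑ j ∈ Finset.Icc 1 m, (⌊φ j⌋ - ⌊φ (j - 1)⌋) *
          (Nat.card {v : Fin (m - j) → A // GoodWord φ (m - j) v} : ℤ) := by
    refine Finset.sum_congr rfl fun j hj => ?_
    rw [Finset.mem_Icc] at hj
    rw [Nat.cast_sub (Nat.floor_mono (hmono (by omega : j - 1 ≤ j))), hfl, hfl]
  rw [hsum, hfl 0] at hz
  linarith
end

section
/- Let A be an alphabet of k ≥ 2 symbols and φ : ℕ → [0,∞) non-decreasing and unbounded. Suppose there exists c ∈ (1, k) with k − ⌊φ(0)⌋ − Σ_{l=1}^{∞} (⌊φ(l)⌋ − ⌊φ(l−1)⌋)/c^l ≥ c. Then the number of φ-aperiodic words of length m in A satisfies |W^g(m)| ≥ c^m for every m ∈ ℕ, and consequently there exists a one-sided infinite φ-aperiodic word w : ℕ → A. -/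
/-- The minimal `l` with `s ≤ φ l`. -/
noncomputable def Lf (φ : ℕ → ℝ) (s : ℕ) : ℕ := sInf {l | (s : ℝ) ≤ φ l}

lemma Lf_spec {φ : ℕ → ℝ} (hunb : ∀ C : ℝ, ∃ j : ℕ, C < φ j) (s : ℕ) :
    (s : ℝ) ≤ φ (Lf φ s) := by
  obtain ⟨j, hj⟩ := hunb s
  exact Nat.sInf_mem (⟨j, hj.le⟩ : {l | (s : ℝ) ≤ φ l}.Nonempty)

lemma Lf_le {φ : ℕ → ℝ} {s l : ℕ} (h : (s : ℝ) ≤ φ l) : Lf φ s ≤ l := Nat.sInf_le h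

lemma Lf_gt {φ : ℕ → ℝ} {s l : ℕ} (h : l < Lf φ s) : φ l < s := by
  by_contra hc
  have h2 : Lf φ s ≤ l := Nat.sInf_le (not_lt.mp hc)
  omega

lemma goodword_prefix {A : Type*} (φ : ℕ → ℝ) {m n : ℕ} (h : n ≤ m) {v : Fin m → A}
    (hv : GoodWord φ m v) : GoodWord φ n (fun i => v (Fin.castLE h i)) := by
  intro i s l hs hlt hmatch
  refine hv i s l hs (lt_of_lt_of_le hlt h) ?_
  intro j hj
  exact hmatch j hj

open Classical in
/-- number of good words of length m -/
noncomputable def Gc (A : Type*) [Fintype A] (φ : ℕ → ℝ) (m : ℕ) : ℕ :=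
  (Finset.univ.filter (fun v : Fin m → A => GoodWord φ m v)).card

open Classical in
lemma Gc_eq_natcard (A : Type*) [Fintype A] (φ : ℕ → ℝ) (m : ℕ) :
    Gc A φ m = Nat.card {v : Fin m → A // GoodWord φ m v} := by
  rw [Nat.card_eq_fintype_card, Fintype.card_subtype]
  rfl

lemma Gc_zero (A : Type*) [Fintype A] (φ : ℕ → ℝ) : Gc A φ 0 = 1 := by
  classical
  rw [Gc]
  have : (Finset.univ.filter (fun v : Fin 0 → A => GoodWord φ 0 v)) = Finset.univ := by
    refine Finset.filter_true_of_mem ?_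
    intro v _ i s l hs hlt
    omega
  rw [this, Finset.card_univ]
  simp

/-- extension equiv: words of length m+1 with good prefix ↔ good words × letter -/
noncomputable def extEquiv {A : Type*} (φ : ℕ → ℝ) (m : ℕ) :
    {v : Fin (m + 1) → A // GoodWord φ m (fun i => v i.castSucc)} ≃
      {u : Fin m → A // GoodWord φ m u} × A where
  toFun v := (⟨fun i => v.1 i.castSucc, v.2⟩, v.1 (Fin.last m))
  invFun ua := ⟨Fin.snoc ua.1.1 ua.2, by
    have h : (fun i : Fin m => (Fin.snoc ua.1.1 ua.2 : Fin (m+1) → A) i.castSucc) = ua.1.1 := by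
      funext i; simp [Fin.snoc_castSucc]
    rw [h]; exact ua.1.2⟩
  left_inv v := by
    ext i
    simp only
    exact congrFun (Fin.snoc_init_self v.1) i
  right_inv ua := by
    refine Prod.ext (Subtype.ext ?_) ?_
    · funext i; simp [Fin.snoc_castSucc]
    · simp [Fin.snoc_last]

open Classical in
lemma card_prefix_good (A : Type*) [Fintype A] (φ : ℕ → ℝ) (m : ℕ) :
    (Finset.univ.filter (fun v : Fin (m+1) → A => GoodWord φ m (fun i => v i.castSucc))).card
      = Gc A φ m * Fintype.card A := by
  classical
  have h1 : (Finset.univ.filter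
        (fun v : Fin (m+1) → A => GoodWord φ m (fun i => v i.castSucc))).card
      = Fintype.card {v : Fin (m+1) → A // GoodWord φ m (fun i => v i.castSucc)} := by
    rw [Fintype.card_subtype]
  rw [h1, Fintype.card_congr (extEquiv φ m), Fintype.card_prod, Fintype.card_subtype]
  rfl

open Classical in
noncomputable def BadF (A : Type*) [Fintype A] (φ : ℕ → ℝ) (m s : ℕ) :
    Finset (Fin (m+1) → A) :=
  Finset.univ.filter (fun v => GoodWord φ m (fun i => v i.castSucc) ∧
    ∀ j : ℕ, j ≤ Lf φ s → v ⟨m - j, by omega⟩ = v ⟨m - s - j, by omega⟩)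

open Classical in
lemma split_subset (A : Type*) [Fintype A] (φ : ℕ → ℝ) (m : ℕ) :
    Finset.univ.filter (fun v : Fin (m+1) → A => GoodWord φ m (fun i => v i.castSucc)) ⊆
      Finset.univ.filter (fun v => GoodWord φ (m+1) v) ∪
        (((Finset.Icc 1 m).filter (fun s => s + Lf φ s ≤ m)).biUnion
          (fun s => BadF A φ m s)) := by
  intro v hv
  rw [Finset.mem_filter] at hv
  obtain ⟨-, hpre⟩ := hv
  by_cases hgood : GoodWord φ (m+1) v
  · exact Finset.mem_union_left _ (Finset.mem_filter.mpr ⟨Finset.mem_univ _, hgood⟩)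
  · refine Finset.mem_union_right _ ?_
    rw [GoodWord] at hgood
    push_neg at hgood
    obtain ⟨i, s, l, hs, hlt, hmatch, hphi⟩ := hgood
    have heq : i + s + l = m := by
      by_contra hne
      have hlt' : i + s + l < m := by omega
      have := hpre i s l hs hlt' (fun j hj => hmatch j hj)
      exact absurd this (not_lt.mpr hphi)
    have hL : Lf φ s ≤ l := Lf_le hphi
    refine Finset.mem_biUnion.mpr ⟨s, ?_, ?_⟩
    · rw [Finset.mem_filter, Finset.mem_Icc]
      exact ⟨⟨hs, by omega⟩, by omega⟩
    · rw [BadF, Finset.mem_filter]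
      refine ⟨Finset.mem_univ _, hpre, ?_⟩
      intro j hj
      have hjl : j ≤ l := le_trans hj hL
      have key := hmatch (l - j) (by omega)
      calc v ⟨m - j, by omega⟩
          = v ⟨i + s + (l - j), by omega⟩ := congrArg v (Fin.ext (by simp; omega))
        _ = v ⟨i + (l - j), by omega⟩ := key.symm
        _ = v ⟨m - s - j, by omega⟩ := congrArg v (Fin.ext (by simp; omega))

open Classical in
lemma bad_card (A : Type*) [Fintype A] (φ : ℕ → ℝ) (m s : ℕ) (hs : 1 ≤ s)
    (hsm : s + Lf φ s ≤ m) :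
    (BadF A φ m s).card ≤ Gc A φ (m - Lf φ s) := by
  set L := Lf φ s with hLdef
  have hL1 : m - L ≤ m + 1 := by omega
  rw [Gc]
  refine Finset.card_le_card_of_injOn
    (fun v (i : Fin (m - L)) => v (Fin.castLE hL1 i)) ?_ ?_
  · intro v hv
    rw [Finset.mem_coe, BadF, Finset.mem_filter] at hv
    refine Finset.mem_coe.mpr (Finset.mem_filter.mpr ⟨Finset.mem_univ _, ?_⟩)
    have h2 : m - L ≤ m := by omega
    have := goodword_prefix φ h2 hv.2.1
    exact this
  · intro v₁ hv₁ v₂ hv₂ hf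
    have hv₁' := Finset.mem_coe.mp hv₁
    have hv₂' := Finset.mem_coe.mp hv₂
    rw [BadF, Finset.mem_filter] at hv₁' hv₂'
    have key : ∀ p : ℕ, ∀ hp : p < m + 1, v₁ ⟨p, hp⟩ = v₂ ⟨p, hp⟩ := by
      intro p
      induction p using Nat.strong_induction_on with
      | _ p IH =>
        intro hp
        by_cases hcase : p < m - L
        · exact congrFun hf ⟨p, hcase⟩
        · have hjle : m - p ≤ L := by omega
          have h1 := hv₁'.2.2 (m - p) hjle
          have h2 := hv₂'.2.2 (m - p) hjle
          have hps : p - s < p := by omega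
          calc v₁ ⟨p, hp⟩ = v₁ ⟨m - (m - p), by omega⟩ := congrArg v₁ (Fin.ext (by simp; omega))
            _ = v₁ ⟨m - s - (m - p), by omega⟩ := h1
            _ = v₁ ⟨p - s, by omega⟩ := congrArg v₁ (Fin.ext (by simp; omega))
            _ = v₂ ⟨p - s, by omega⟩ := IH (p - s) hps (by omega)
            _ = v₂ ⟨m - s - (m - p), by omega⟩ := congrArg v₂ (Fin.ext (by simp; omega))
            _ = v₂ ⟨m - (m - p), by omega⟩ := h2.symm
            _ = v₂ ⟨p, hp⟩ := congrArg v₂ (Fin.ext (by simp; omega))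
    funext i
    have := key i.1 i.2
    simpa using this

open Classical in
lemma key_count (A : Type*) [Fintype A] (φ : ℕ → ℝ) (m : ℕ) :
    Gc A φ m * Fintype.card A ≤ Gc A φ (m+1) +
      ∑ s ∈ (Finset.Icc 1 m).filter (fun s => s + Lf φ s ≤ m), Gc A φ (m - Lf φ s) := by
  rw [← card_prefix_good A φ m]
  refine le_trans (Finset.card_le_card (split_subset A φ m)) ?_
  refine le_trans (Finset.card_union_le _ _) ?_
  have h1 : (Finset.univ.filter (fun v : Fin (m+1) → A => GoodWord φ (m+1) v)).card
      = Gc A φ (m+1) := rfl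
  rw [h1]
  gcongr
  refine le_trans (Finset.card_biUnion_le) ?_
  refine Finset.sum_le_sum ?_
  intro s hsmem
  rw [Finset.mem_filter, Finset.mem_Icc] at hsmem
  exact bad_card A φ m s hsmem.1.1 hsmem.2

lemma sum_fiber_bound (φ : ℕ → ℝ) (hmono : Monotone φ) (hnonneg : ∀ l, 0 ≤ φ l)
    (hunb : ∀ C : ℝ, ∃ j : ℕ, C < φ j) (c : ℝ) (hc1 : 1 < c)
    (hsum : Summable fun l : ℕ => ((⌊φ (l + 1)⌋ : ℝ) - (⌊φ l⌋ : ℝ)) / c ^ (l + 1)) (N : ℕ) :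
    ∑ s ∈ Finset.Icc 1 N, ((c : ℝ) ^ Lf φ s)⁻¹ ≤
      (⌊φ 0⌋ : ℝ) + ∑' l : ℕ, ((⌊φ (l + 1)⌋ : ℝ) - (⌊φ l⌋ : ℝ)) / c ^ (l + 1) := by
  classical
  have hc0 : (0:ℝ) < c := lt_trans one_pos hc1
  set M := (Finset.Icc 1 N).sup (Lf φ) with hM
  have hmaps : ∀ s ∈ Finset.Icc 1 N, Lf φ s ∈ Finset.range (M + 1) := by
    intro s hs
    exact Finset.mem_range.mpr (Nat.lt_succ_of_le (Finset.le_sup hs))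
  rw [← Finset.sum_fiberwise_of_maps_to hmaps (fun s => ((c:ℝ) ^ Lf φ s)⁻¹)]
  have hinner : ∀ l ∈ Finset.range (M + 1),
      ∑ s ∈ (Finset.Icc 1 N).filter (fun s => Lf φ s = l), ((c:ℝ) ^ Lf φ s)⁻¹
        = (((Finset.Icc 1 N).filter (fun s => Lf φ s = l)).card : ℝ) * ((c:ℝ) ^ l)⁻¹ := by
    intro l _
    rw [Finset.sum_congr rfl (fun s hs => by rw [(Finset.mem_filter.mp hs).2]),
      Finset.sum_const, nsmul_eq_mul]
  rw [Finset.sum_congr rfl hinner, Finset.sum_range_succ']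
  have hcard0 : ((Finset.Icc 1 N).filter (fun s => Lf φ s = 0)).card ≤ ⌊φ 0⌋₊ := by
    have hsub : (Finset.Icc 1 N).filter (fun s => Lf φ s = 0) ⊆ Finset.Icc 1 ⌊φ 0⌋₊ := by
      intro s hs
      rw [Finset.mem_filter, Finset.mem_Icc] at hs
      refine Finset.mem_Icc.mpr ⟨hs.1.1, Nat.le_floor ?_⟩
      have := Lf_spec hunb s
      rwa [hs.2] at this
    calc _ ≤ (Finset.Icc 1 ⌊φ 0⌋₊).card := Finset.card_le_card hsub
      _ = ⌊φ 0⌋₊ := by rw [Nat.card_Icc]; omega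
  have hcardl : ∀ l : ℕ, ((Finset.Icc 1 N).filter (fun s => Lf φ s = l + 1)).card
      ≤ ⌊φ (l+1)⌋₊ - ⌊φ l⌋₊ := by
    intro l
    have hsub : (Finset.Icc 1 N).filter (fun s => Lf φ s = l + 1) ⊆
        Finset.Icc (⌊φ l⌋₊ + 1) ⌊φ (l+1)⌋₊ := by
      intro s hs
      rw [Finset.mem_filter, Finset.mem_Icc] at hs
      refine Finset.mem_Icc.mpr ⟨?_, Nat.le_floor ?_⟩
      · have := Lf_gt (show l < Lf φ s by omega)
        have := (Nat.floor_lt (hnonneg l)).mpr this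
        omega
      · have := Lf_spec hunb s
        rwa [hs.2] at this
    calc _ ≤ (Finset.Icc (⌊φ l⌋₊ + 1) ⌊φ (l+1)⌋₊).card := Finset.card_le_card hsub
      _ = ⌊φ (l+1)⌋₊ - ⌊φ l⌋₊ := by rw [Nat.card_Icc]; omega
  have hfloorle : ∀ l : ℕ, ⌊φ l⌋₊ ≤ ⌊φ (l+1)⌋₊ := fun l => Nat.floor_mono (hmono (by omega))
  have hterm_nonneg : ∀ l : ℕ, 0 ≤ ((⌊φ (l + 1)⌋ : ℝ) - (⌊φ l⌋ : ℝ)) / c ^ (l + 1) := by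
    intro l
    apply div_nonneg _ (le_of_lt (pow_pos hc0 _))
    have : (⌊φ l⌋ : ℤ) ≤ ⌊φ (l+1)⌋ := Int.floor_mono (hmono (by omega))
    exact sub_nonneg.mpr (by exact_mod_cast this)
  have hfl : ∀ l : ℕ, ((⌊φ l⌋₊ : ℝ)) = (⌊φ l⌋ : ℝ) := fun l =>
    natCast_floor_eq_intCast_floor (hnonneg l)
  rw [add_comm]
  gcongr ?_ + ?_
  · rw [pow_zero, inv_one, mul_one, ← hfl 0]
    exact_mod_cast hcard0
  · calc ∑ l ∈ Finset.range M,
          ((((Finset.Icc 1 N).filter (fun s => Lf φ s = l + 1)).card : ℝ)) * ((c:ℝ) ^ (l+1))⁻¹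
        ≤ ∑ l ∈ Finset.range M, ((⌊φ (l + 1)⌋ : ℝ) - (⌊φ l⌋ : ℝ)) / c ^ (l + 1) := by
          refine Finset.sum_le_sum (fun l _ => ?_)
          rw [div_eq_mul_inv]
          refine mul_le_mul_of_nonneg_right ?_ (by positivity)
          have h1 : ((((Finset.Icc 1 N).filter (fun s => Lf φ s = l + 1)).card : ℝ))
              ≤ ((⌊φ (l+1)⌋₊ - ⌊φ l⌋₊ : ℕ) : ℝ) := by exact_mod_cast hcardl l
          refine h1.trans ?_
          rw [Nat.cast_sub (hfloorle l), hfl, hfl]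
      _ ≤ ∑' l : ℕ, ((⌊φ (l + 1)⌋ : ℝ) - (⌊φ l⌋ : ℝ)) / c ^ (l + 1) :=
          Summable.sum_le_tsum _ (fun l _ => hterm_nonneg l) hsum

lemma growth (A : Type*) [Fintype A] (k : ℕ) (hk : Fintype.card A = k)
    (φ : ℕ → ℝ) (hmono : Monotone φ) (hnonneg : ∀ l : ℕ, 0 ≤ φ l)
    (hunb : ∀ C : ℝ, ∃ j : ℕ, C < φ j)
    (c : ℝ) (hc1 : 1 < c)
    (hsum : Summable fun l : ℕ => ((⌊φ (l + 1)⌋ : ℝ) - (⌊φ l⌋ : ℝ)) / c ^ (l + 1))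
    (hcond : c ≤ (k : ℝ) - (⌊φ 0⌋ : ℝ) -
      ∑' l : ℕ, ((⌊φ (l + 1)⌋ : ℝ) - (⌊φ l⌋ : ℝ)) / c ^ (l + 1)) :
    ∀ m : ℕ, c * (Gc A φ m : ℝ) ≤ (Gc A φ (m+1) : ℝ) := by
  intro m
  induction m using Nat.strong_induction_on with
  | _ m IH =>
    have hc0 : (0:ℝ) < c := lt_trans one_pos hc1
    set T := (Finset.Icc 1 m).filter (fun s => s + Lf φ s ≤ m) with hT
    have hchain : ∀ d a : ℕ, a + d ≤ m → c ^ d * (Gc A φ a : ℝ) ≤ (Gc A φ (a + d) : ℝ) := by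
      intro d
      induction d with
      | zero => intro a _; simp
      | succ d hd =>
        intro a ha
        have h1 := hd a (by omega)
        have h2 := IH (a + d) (by omega)
        calc c ^ (d+1) * (Gc A φ a : ℝ) = c * (c ^ d * (Gc A φ a : ℝ)) := by ring
          _ ≤ c * (Gc A φ (a + d) : ℝ) := mul_le_mul_of_nonneg_left h1 hc0.le
          _ ≤ (Gc A φ (a + d + 1) : ℝ) := h2
    have hmain : (Gc A φ m : ℝ) * (k : ℝ) ≤ (Gc A φ (m+1) : ℝ) +
        ∑ s ∈ T, (Gc A φ (m - Lf φ s) : ℝ) := by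
      have := key_count A φ m
      rw [hk] at this
      exact_mod_cast this
    have hstep : ∀ s ∈ T, (Gc A φ (m - Lf φ s) : ℝ) ≤ ((c ^ Lf φ s)⁻¹) * (Gc A φ m : ℝ) := by
      intro s hsT
      rw [hT, Finset.mem_filter, Finset.mem_Icc] at hsT
      have hLm : Lf φ s ≤ m := by omega
      have := hchain (Lf φ s) (m - Lf φ s) (by omega)
      rw [show m - Lf φ s + Lf φ s = m by omega] at this
      rw [inv_mul_eq_div, le_div_iff₀ (pow_pos hc0 _)]
      linarith [this, mul_comm ((Gc A φ (m - Lf φ s) : ℝ)) (c ^ Lf φ s)]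
    have hsum2 : ∑ s ∈ T, (Gc A φ (m - Lf φ s) : ℝ) ≤
        (∑ s ∈ Finset.Icc 1 m, ((c : ℝ) ^ Lf φ s)⁻¹) * (Gc A φ m : ℝ) := by
      calc ∑ s ∈ T, (Gc A φ (m - Lf φ s) : ℝ)
          ≤ ∑ s ∈ T, ((c ^ Lf φ s)⁻¹) * (Gc A φ m : ℝ) := Finset.sum_le_sum hstep
        _ = (∑ s ∈ T, ((c : ℝ) ^ Lf φ s)⁻¹) * (Gc A φ m : ℝ) := by
            rw [Finset.sum_mul]
        _ ≤ (∑ s ∈ Finset.Icc 1 m, ((c : ℝ) ^ Lf φ s)⁻¹) * (Gc A φ m : ℝ) := by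
            refine mul_le_mul_of_nonneg_right ?_ (Nat.cast_nonneg _)
            refine Finset.sum_le_sum_of_subset_of_nonneg (Finset.filter_subset _ _) ?_
            intro s _ _
            positivity
    have hfb := sum_fiber_bound φ hmono hnonneg hunb c hc1 hsum m
    have hkc : ∑ s ∈ Finset.Icc 1 m, ((c : ℝ) ^ Lf φ s)⁻¹ ≤ (k : ℝ) - c := by linarith
    have hGnn : (0:ℝ) ≤ (Gc A φ m : ℝ) := Nat.cast_nonneg _
    have : (∑ s ∈ Finset.Icc 1 m, ((c : ℝ) ^ Lf φ s)⁻¹) * (Gc A φ m : ℝ)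
        ≤ ((k : ℝ) - c) * (Gc A φ m : ℝ) := mul_le_mul_of_nonneg_right hkc hGnn
    nlinarith [hmain, hsum2]

/-- If there is `c ∈ (1,k)` with
`k − ⌊φ(0)⌋ − Σ_{l≥1} (⌊φ(l)⌋ − ⌊φ(l−1)⌋)/c^l ≥ c`, then `|W^g(m)| ≥ c^m` for all `m`,
and there exists a one-sided infinite φ-aperiodic word. -/
theorem exists_phiaperiodic_word {A : Type*} [Fintype A] (k : ℕ) (hk : Fintype.card A = k)
    (hk2 : 2 ≤ k) (φ : ℕ → ℝ) (hmono : Monotone φ) (hnonneg : ∀ l : ℕ, 0 ≤ φ l)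
    (hunb : ∀ C : ℝ, ∃ j : ℕ, C < φ j)
    (c : ℝ) (hc1 : 1 < c) (hck : c < k)
    (hsum : Summable fun l : ℕ => ((⌊φ (l + 1)⌋ : ℝ) - (⌊φ l⌋ : ℝ)) / c ^ (l + 1))
    (hcond : c ≤ (k : ℝ) - (⌊φ 0⌋ : ℝ) -
      ∑' l : ℕ, ((⌊φ (l + 1)⌋ : ℝ) - (⌊φ l⌋ : ℝ)) / c ^ (l + 1)) :
    (∀ m : ℕ, c ^ m ≤ (Nat.card {v : Fin m → A // GoodWord φ m v} : ℝ)) ∧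
    ∃ w : ℕ → A, ∀ i s l : ℕ, 1 ≤ s →
      (∀ j : ℕ, j ≤ l → w (i + j) = w (i + s + j)) → φ l < s := by
  classical
  have hc0 : (0:ℝ) < c := lt_trans one_pos hc1
  have hgrow := growth A k hk φ hmono hnonneg hunb c hc1 hsum hcond
  have hpow : ∀ m : ℕ, c ^ m ≤ (Gc A φ m : ℝ) := by
    intro m
    induction m with
    | zero => simp [Gc_zero A φ]
    | succ m ih =>
      calc c ^ (m+1) = c * c ^ m := by ring
        _ ≤ c * (Gc A φ m : ℝ) := mul_le_mul_of_nonneg_left ih hc0.le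
        _ ≤ (Gc A φ (m+1) : ℝ) := hgrow m
  have hfirst : ∀ m : ℕ, c ^ m ≤ (Nat.card {v : Fin m → A // GoodWord φ m v} : ℝ) := by
    intro m
    rw [← Gc_eq_natcard A φ m]
    exact hpow m
  refine ⟨hfirst, ?_⟩
  -- compactness via an ultrafilter extending the cofinite filter
  have hA : Nonempty A := by
    have : 0 < Fintype.card A := by omega
    exact Fintype.card_pos_iff.mp this
  have hgood : ∀ m : ℕ, ∃ v : Fin m → A, GoodWord φ m v := by
    intro m
    have h1 : (0:ℝ) < (Nat.card {v : Fin m → A // GoodWord φ m v} : ℝ) :=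
      lt_of_lt_of_le (pow_pos hc0 m) (hfirst m)
    have h2 : 0 < Nat.card {v : Fin m → A // GoodWord φ m v} := by exact_mod_cast h1
    obtain ⟨⟨v, hv⟩⟩ := (Nat.card_pos_iff.mp h2).1
    exact ⟨v, hv⟩
  choose V hV using hgood
  let a₀ : A := Classical.arbitrary A
  let E : ℕ → ℕ → A := fun m n => if h : n < m then V m ⟨n, h⟩ else a₀
  let U : Ultrafilter ℕ := Filter.hyperfilter ℕ
  have hexists : ∀ n : ℕ, ∃ a : A, {m : ℕ | E m n = a} ∈ U := by
    intro n
    by_contra hcon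
    push_neg at hcon
    have hcompl : ∀ a : A, {m : ℕ | E m n = a}ᶜ ∈ U := by
      intro a
      exact Ultrafilter.compl_mem_iff_notMem.mpr (hcon a)
    have hint : (⋂ a : A, {m : ℕ | E m n = a}ᶜ) ∈ U := by
      exact Filter.iInter_mem.mpr hcompl
    have hempty : (⋂ a : A, {m : ℕ | E m n = a}ᶜ) = ∅ := by
      ext m
      simp only [Set.mem_iInter, Set.mem_compl_iff, Set.mem_setOf_eq, Set.mem_empty_iff_false,
        iff_false, not_forall, not_not]
      exact ⟨E m n, rfl⟩
    rw [hempty] at hint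
    exact U.empty_notMem hint
  choose w hw using hexists
  refine ⟨w, ?_⟩
  intro i s l hs hmatch
  have hbig : {m : ℕ | i + s + l < m} ∈ U := by
    have : {m : ℕ | i + s + l < m} ∈ (Filter.cofinite : Filter ℕ) := by
      rw [Filter.mem_cofinite]
      have : {m : ℕ | i + s + l < m}ᶜ = Set.Iic (i + s + l) := by
        ext m
        simp only [Set.mem_compl_iff, Set.mem_setOf_eq, Set.mem_Iic, not_lt]
      rw [this]
      exact Set.finite_Iic _
    exact Filter.hyperfilter_le_cofinite this
  have hfin : (⋂ n ∈ Set.Iic (i + s + l), {m : ℕ | E m n = w n}) ∈ U :=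
    (Filter.biInter_mem (Set.finite_Iic _)).mpr (fun n _ => hw n)
  have hintU : ({m : ℕ | i + s + l < m} ∩ ⋂ n ∈ Set.Iic (i + s + l), {m : ℕ | E m n = w n}) ∈ U :=
    Filter.inter_mem hbig hfin
  obtain ⟨m, hm1, hm2⟩ := Filter.nonempty_of_mem hintU
  rw [Set.mem_setOf_eq] at hm1
  have hmeq : ∀ n : ℕ, n ≤ i + s + l → E m n = w n := by
    intro n hn
    have := Set.mem_iInter₂.mp hm2 n (Set.mem_Iic.mpr hn)
    exact this
  have hEV : ∀ n : ℕ, ∀ h : n < m, V m ⟨n, h⟩ = E m n := by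
    intro n h
    simp only [E, dif_pos h]
  refine hV m i s l hs (by omega) ?_
  intro j hj
  have h1 : i + j < m := by omega
  have h2 : i + s + j < m := by omega
  calc V m ⟨i + j, by omega⟩ = E m (i + j) := hEV _ h1
    _ = w (i + j) := hmeq _ (by omega)
    _ = w (i + s + j) := hmatch j hj
    _ = E m (i + s + j) := (hmeq _ (by omega)).symm
    _ = V m ⟨i + s + j, by omega⟩ := (hEV _ h2).symm
end

section
/- Let k ≥ 2, 0 < δ < 1, and k^δ < c < k. Then there exists l₀ ∈ ℕ such that the function φ defined by φ(l) = 0 for l ≤ l₀ and φ(l) = k^{δl} for l > l₀ satisfies k − ⌊φ(0)⌋ − Σ_{l=1}^{∞} (⌊φ(l)⌋ − ⌊φ(l−1)⌋)/c^l ≥ c. -/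
/-- For `k ≥ 2`, `0 < δ < 1` and `k^δ < c < k`, there exists `l₀` such
that the function `φ(l) = 0` for `l ≤ l₀` and `φ(l) = k^{δl}` for `l > l₀` satisfies
`k − ⌊φ(0)⌋ − Σ_{l≥1} (⌊φ(l)⌋ − ⌊φ(l−1)⌋)/c^l ≥ c`. -/
theorem summability_criterion_satisfied (k : ℕ) (hk : 2 ≤ k)
    (δ : ℝ) (hδ0 : 0 < δ) (hδ1 : δ < 1)
    (c : ℝ) (hc1 : (k : ℝ) ^ δ < c) (hc2 : c < k) :
    ∃ l₀ : ℕ, ∀ φ : ℕ → ℝ,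
      (∀ l : ℕ, l ≤ l₀ → φ l = 0) →
      (∀ l : ℕ, l₀ < l → φ l = (k : ℝ) ^ (δ * l)) →
      c ≤ (k : ℝ) - (⌊φ 0⌋ : ℝ) -
        ∑' l : ℕ, ((⌊φ (l + 1)⌋ : ℝ) - (⌊φ l⌋ : ℝ)) / c ^ (l + 1) := by
  have hk0 : (0:ℝ) < k := by positivity
  have hk1 : (1:ℝ) ≤ k := by exact_mod_cast Nat.one_le_of_lt hk
  have hkd0 : (0:ℝ) < (k:ℝ) ^ δ := Real.rpow_pos_of_pos hk0 δ
  have hc0 : (0:ℝ) < c := hkd0.trans hc1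
  set r : ℝ := (k:ℝ) ^ δ / c with hr
  have hr0 : 0 ≤ r := by positivity
  have hr1 : r < 1 := (div_lt_one hc0).2 hc1
  have hkc : (0:ℝ) < (k:ℝ) - c := by linarith
  obtain ⟨n, hn⟩ := exists_pow_lt_of_lt_one (show (0:ℝ) < ((k:ℝ) - c) * (1 - r) by
    have : (0:ℝ) < 1 - r := by linarith
    positivity) hr1
  refine ⟨n, fun φ h0 h1 => ?_⟩
  have hφ0 : φ 0 = 0 := h0 0 (Nat.zero_le n)
  have hfloor0 : (⌊φ 0⌋ : ℝ) = 0 := by rw [hφ0]; simp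
  -- φ is nonnegative
  have hφnn : ∀ l, 0 ≤ φ l := by
    intro l
    rcases le_or_gt l n with h | h
    · rw [h0 l h]
    · rw [h1 l h]; positivity
  -- φ is monotone step
  have hmono : ∀ l, φ l ≤ φ (l + 1) := by
    intro l
    rcases le_or_gt (l + 1) n with h | h
    · rw [h0 l (by omega), h0 (l + 1) h]
    · rw [h1 (l + 1) h]
      rcases le_or_gt l n with h' | h'
      · rw [h0 l h']; positivity
      · rw [h1 l h']
        apply Real.rpow_le_rpow_of_exponent_le hk1
        have : (l:ℝ) ≤ (l:ℝ) + 1 := by linarith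
        push_cast
        nlinarith
  -- rpow as pow
  have hpow : ∀ l : ℕ, (k:ℝ) ^ (δ * (l:ℝ)) = ((k:ℝ) ^ δ) ^ l := by
    intro l
    rw [← Real.rpow_natCast ((k:ℝ) ^ δ) l, ← Real.rpow_mul hk0.le]
  set f : ℕ → ℝ := fun l => ((⌊φ (l + 1)⌋ : ℝ) - (⌊φ l⌋ : ℝ)) / c ^ (l + 1) with hf
  set g : ℕ → ℝ := fun l => if n ≤ l then r ^ (l + 1) else 0 with hg
  have hfnn : ∀ l, 0 ≤ f l := by
    intro l
    apply div_nonneg _ (by positivity)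
    have := Int.floor_le_floor (hmono l)
    simp only [sub_nonneg]
    exact_mod_cast this
  have hfg : ∀ l, f l ≤ g l := by
    intro l
    rcases le_or_gt n l with h | h
    · simp only [hg, if_pos h]
      have h1' : φ (l + 1) = (k:ℝ) ^ (δ * ((l:ℝ) + 1)) := by
        have := h1 (l + 1) (by omega)
        rw [this]; push_cast; ring_nf
      have hA : (⌊φ (l + 1)⌋ : ℝ) ≤ ((k:ℝ) ^ δ) ^ (l + 1) := by
        calc (⌊φ (l + 1)⌋ : ℝ) ≤ φ (l + 1) := Int.floor_le _
          _ = ((k:ℝ) ^ δ) ^ (l + 1) := by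
              rw [h1', show δ * ((l:ℝ) + 1) = δ * ((l + 1 : ℕ) : ℝ) by push_cast; ring,
                hpow (l + 1)]
      have hB : (0:ℝ) ≤ (⌊φ l⌋ : ℝ) := by
        exact_mod_cast Int.floor_nonneg.2 (hφnn l)
      have : f l ≤ ((k:ℝ) ^ δ) ^ (l + 1) / c ^ (l + 1) := by
        apply div_le_div_of_nonneg_right _ (by positivity) |>.trans_eq rfl
        · linarith
      calc f l ≤ ((k:ℝ) ^ δ) ^ (l + 1) / c ^ (l + 1) := this
        _ = r ^ (l + 1) := by rw [hr, div_pow]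
    · have h01 : φ l = 0 := h0 l (by omega)
      have h02 : φ (l + 1) = 0 := h0 (l + 1) (by omega)
      simp [hf, hg, h01, h02, if_neg (not_le.2 h)]
  have hgr : ∀ l, g l ≤ r ^ l := by
    intro l
    rcases le_or_gt n l with h | h
    · simp only [hg, if_pos h]
      calc r ^ (l + 1) = r ^ l * r := by ring
        _ ≤ r ^ l * 1 := by
            apply mul_le_mul_of_nonneg_left hr1.le (by positivity)
        _ = r ^ l := by ring
    · simp only [hg, if_neg (not_le.2 h)]
      positivity
  have hgnn : ∀ l, 0 ≤ g l := by
    intro l; simp only [hg]; split <;> positivity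
  have hsumg : Summable g :=
    Summable.of_nonneg_of_le hgnn hgr (summable_geometric_of_lt_one hr0 hr1)
  have hsumf : Summable f := Summable.of_nonneg_of_le hfnn hfg hsumg
  -- compute tsum g
  have htg : ∑' l, g l = r ^ (n + 1) / (1 - r) := by
    have hsplit := Summable.sum_add_tsum_nat_add n hsumg
    have hzero : ∑ i ∈ Finset.range n, g i = 0 := by
      apply Finset.sum_eq_zero
      intro i hi
      simp only [hg, if_neg (not_le.2 (Finset.mem_range.1 hi))]
    have htail : ∑' l, g (l + n) = r ^ (n + 1) / (1 - r) := by
      have : ∀ l : ℕ, g (l + n) = r ^ (n + 1) * r ^ l := by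
        intro l
        simp only [hg, if_pos (Nat.le_add_left n l)]
        ring
      rw [tsum_congr this, tsum_mul_left, tsum_geometric_of_lt_one hr0 hr1]
      rw [div_eq_mul_inv]
    linarith [hsplit, hzero, htail]
  have hle : ∑' l, f l ≤ (k:ℝ) - c := by
    have h1' : ∑' l, f l ≤ ∑' l, g l := Summable.tsum_le_tsum hfg hsumf hsumg
    rw [htg] at h1'
    have h2' : r ^ (n + 1) / (1 - r) ≤ (k:ℝ) - c := by
      rw [div_le_iff₀ (by linarith)]
      have : r ^ (n + 1) ≤ r ^ n := by
        apply pow_le_pow_of_le_one hr0 hr1.le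
        omega
      calc r ^ (n + 1) ≤ r ^ n := this
        _ ≤ ((k:ℝ) - c) * (1 - r) := hn.le
    linarith
  rw [hfloor0]
  have : ∑' l : ℕ, ((⌊φ (l + 1)⌋ : ℝ) - (⌊φ l⌋ : ℝ)) / c ^ (l + 1) = ∑' l, f l := rfl
  rw [this]
  linarith
end

section
/- Let φ : ℕ → [0,∞) be non-decreasing with limsup_{l→∞} (1/l)·ln(φ(l)) ≤ δ·ln(k) for some 0 < δ < 1, where k ≥ 2 is the alphabet size. Then there exist l₀ ∈ ℕ and a biinfinite word w ∈ A^ℤ such that R_w(l) ≥ φ(l) for every l ≥ l₀, where R_w(l) = min over i ∈ ℤ of min{s ≥ 1 : w(i+s+j) = w(i+j) for all 0 ≤ j ≤ l}. -/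
namespace Aux19
set_option linter.unusedSectionVars false
set_option maxHeartbeats 800000

variable {A : Type*} [Fintype A] [DecidableEq A]

def allWords (A : Type*) [Fintype A] [DecidableEq A] : ℕ → Finset (List A)
  | 0 => {[]}
  | n+1 => ((Finset.univ : Finset A) ×ˢ allWords A n).image fun p => p.1 :: p.2

lemma mem_allWords : ∀ (n : ℕ) (u : List A), u ∈ allWords A n ↔ u.length = n := by
  intro n
  induction n with
  | zero => intro u; simp [allWords, List.length_eq_zero_iff]
  | succ n ih =>
    intro u
    simp only [allWords, Finset.mem_image, Finset.mem_product, Finset.mem_univ, true_and]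
    constructor
    · rintro ⟨⟨a, t⟩, ht, rfl⟩
      simp [(ih t).1 ht]
    · intro hu
      cases u with
      | nil => simp at hu
      | cons a t =>
        exact ⟨⟨a, t⟩, (ih t).2 (by simpa using hu), rfl⟩

variable (N : ℕ → ℕ) (l₀ : ℕ) (a₀ : A)

def ValidL (u : List A) : Prop :=
  ∀ l, l₀ ≤ l → ∀ s i : ℕ, 1 ≤ s → i + s + l < u.length →
    (∀ j, j ≤ l → u.getD (i + s + j) a₀ = u.getD (i + j) a₀) → N l < s

lemma getD_drop' (u : List A) (m i : ℕ) (h : m + i < u.length) :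
    (u.drop m).getD i a₀ = u.getD (m + i) a₀ := by
  rw [List.getD_eq_getElem _ _ (by simp [Nat.lt_sub_iff_add_lt']; omega),
    List.getD_eq_getElem _ _ h]
  simp [List.getElem_drop]

lemma valid_drop {u : List A} (h : ValidL N l₀ a₀ u) (m : ℕ) :
    ValidL N l₀ a₀ (u.drop m) := by
  intro l hl s i hs hlen hmatch
  rw [List.length_drop] at hlen
  refine h l hl s (m + i) hs (by omega) ?_
  intro j hj
  have h1 : m + i + s + j = m + (i + s + j) := by ring
  have h2 : m + i + j = m + (i + j) := by ring
  rw [h1, h2, ← getD_drop' a₀ u m _ (by omega), ← getD_drop' a₀ u m _ (by omega)]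
  exact hmatch j hj

lemma eq_of_getD {u v : List A} (hlen : u.length = v.length)
    (h : ∀ m, u.getD m a₀ = v.getD m a₀) : u = v := by
  apply List.ext_getElem hlen
  intro m h1 h2
  rw [← List.getD_eq_getElem u a₀ h1, ← List.getD_eq_getElem v a₀ h2]
  exact h m

lemma badLS_inj {n l s : ℕ} (hs : 1 ≤ s) {u v : List A}
    (hul : u.length = n+1) (hvl : v.length = n+1)
    (hum : ∀ j, j ≤ l → u.getD (s+j) a₀ = u.getD j a₀)
    (hvm : ∀ j, j ≤ l → v.getD (s+j) a₀ = v.getD j a₀)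
    (hd : u.drop (l+1) = v.drop (l+1)) : u = v := by
  refine eq_of_getD a₀ (by omega) ?_
  suffices H : ∀ q m, n + 1 - m ≤ q → u.getD m a₀ = v.getD m a₀ by
    intro m; exact H (n+1) m (by omega)
  intro q
  induction q with
  | zero =>
    intro m hm
    rw [List.getD_eq_default _ _ (by omega), List.getD_eq_default _ _ (by omega)]
  | succ q ih =>
    intro m hm
    by_cases hmn : n + 1 ≤ m
    · rw [List.getD_eq_default _ _ (by omega), List.getD_eq_default _ _ (by omega)]
    · by_cases hml : l + 1 ≤ m
      · have e1 : u.getD m a₀ = (u.drop (l+1)).getD (m - (l+1)) a₀ := by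
          rw [getD_drop' a₀ u (l+1) (m - (l+1)) (by omega)]
          congr 1; omega
        have e2 : v.getD m a₀ = (v.drop (l+1)).getD (m - (l+1)) a₀ := by
          rw [getD_drop' a₀ v (l+1) (m - (l+1)) (by omega)]
          congr 1; omega
        rw [e1, e2, hd]
      · have hm2 : m ≤ l := by omega
        rw [← hum m hm2, ← hvm m hm2]
        exact ih (s + m) (by omega)

lemma exists_violation {a : A} {t : List A} (ht : ValidL N l₀ a₀ t)
    (hu : ¬ ValidL N l₀ a₀ (a :: t)) :
    ∃ l s, l₀ ≤ l ∧ 1 ≤ s ∧ s ≤ N l ∧ s + l < t.length + 1 ∧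
      ∀ j, j ≤ l → (a :: t).getD (s+j) a₀ = (a :: t).getD j a₀ := by
  unfold ValidL at hu; push_neg at hu
  obtain ⟨l, hl, s, i, hs, hlen, hmatch, hNl⟩ := hu
  simp only [List.length_cons] at hlen
  cases i with
  | zero =>
    exact ⟨l, s, hl, hs, by omega, by omega, by simpa using hmatch⟩
  | succ i =>
    exfalso
    have hviol := ht l hl s i hs (by omega) ?_
    · omega
    · intro j hj
      have h := hmatch j hj
      have e1 : i + 1 + s + j = (i + s + j) + 1 := by omega
      have e2 : i + 1 + j = (i + j) + 1 := by omega
      rw [e1, e2, List.getD_cons_succ, List.getD_cons_succ] at h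
      exact h

open Classical in
noncomputable def VS (n : ℕ) : Finset (List A) :=
  (allWords A n).filter (fun u => ValidL N l₀ a₀ u)

lemma mem_VS {n : ℕ} {u : List A} :
    u ∈ VS N l₀ a₀ n ↔ u.length = n ∧ ValidL N l₀ a₀ u := by
  classical
  simp [VS, mem_allWords]

lemma card_step (n : ℕ) :
    Fintype.card A * (VS N l₀ a₀ n).card ≤
      (VS N l₀ a₀ (n+1)).card +
        ∑ l ∈ Finset.Icc l₀ n, N l * (VS N l₀ a₀ (n - l)).card := by
  classical
  set V : ℕ → Finset (List A) := VS N l₀ a₀ with hV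
  set E : Finset (List A) :=
    ((Finset.univ : Finset A) ×ˢ V n).image (fun p => p.1 :: p.2) with hE
  have hinj : Function.Injective (fun p : A × List A => p.1 :: p.2) := by
    rintro ⟨a, t⟩ ⟨b, u⟩ h
    simp only [List.cons.injEq] at h
    exact Prod.ext h.1 h.2
  have hEcard : E.card = Fintype.card A * (V n).card := by
    rw [hE, Finset.card_image_of_injective _ hinj, Finset.card_product,
      Finset.card_univ]
  -- membership facts about E
  have hmemE : ∀ u ∈ E, ∃ a t, u = a :: t ∧ t.length = n ∧ ValidL N l₀ a₀ t := by
    intro u hu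
    rw [hE] at hu
    simp only [Finset.mem_image, Finset.mem_product, Finset.mem_univ, true_and] at hu
    obtain ⟨⟨a, t⟩, ht, rfl⟩ := hu
    obtain ⟨h1, h2⟩ := (mem_VS N l₀ a₀).1 ht
    exact ⟨a, t, rfl, h1, h2⟩
  -- split E into valid and bad parts
  have hsplitE := Finset.card_filter_add_card_filter_not
    (s := E) (p := fun u => ValidL N l₀ a₀ u)
  set Good : Finset (List A) := E.filter (fun u => ValidL N l₀ a₀ u) with hGood
  set Bad : Finset (List A) := E.filter (fun u => ¬ ValidL N l₀ a₀ u) with hBad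
  have hGsub : Good ⊆ V (n+1) := by
    intro u hu
    rw [hGood, Finset.mem_filter] at hu
    obtain ⟨huE, huval⟩ := hu
    obtain ⟨a, t, rfl, hlen, -⟩ := hmemE u huE
    exact (mem_VS N l₀ a₀).2 ⟨by simp [hlen], huval⟩
  -- bad words are covered by the (l, s)-indexed families
  set BadLS : ℕ → ℕ → Finset (List A) := fun l s =>
    E.filter (fun u => ∀ j, j ≤ l → u.getD (s+j) a₀ = u.getD j a₀) with hBadLS
  have hcover : Bad ⊆ (Finset.Icc l₀ n).biUnion
      (fun l => (Finset.Icc 1 (N l)).biUnion (fun s => BadLS l s)) := by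
    intro u hu
    rw [hBad, Finset.mem_filter] at hu
    obtain ⟨huE, hunv⟩ := hu
    obtain ⟨a, t, rfl, hlen, htval⟩ := hmemE _ huE
    obtain ⟨l, s, hl, hs, hsN, hlenv, hmatch⟩ := exists_violation N l₀ a₀ htval hunv
    refine Finset.mem_biUnion.2 ⟨l, Finset.mem_Icc.2 ⟨hl, by omega⟩,
      Finset.mem_biUnion.2 ⟨s, Finset.mem_Icc.2 ⟨hs, hsN⟩, ?_⟩⟩
    rw [hBadLS, Finset.mem_filter]
    exact ⟨huE, hmatch⟩
  -- each BadLS l s injects into V (n - l)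
  have hBadLScard : ∀ l ∈ Finset.Icc l₀ n, ∀ s ∈ Finset.Icc 1 (N l),
      (BadLS l s).card ≤ (V (n - l)).card := by
    intro l hl s hs
    rw [Finset.mem_Icc] at hl hs
    apply Finset.card_le_card_of_injOn (fun u => u.drop (l+1))
    · intro u hu
      rw [hBadLS, Finset.mem_coe, Finset.mem_filter] at hu
      obtain ⟨huE, -⟩ := hu
      obtain ⟨a, t, rfl, hlen, htval⟩ := hmemE _ huE
      refine (mem_VS N l₀ a₀).2 ⟨by simp [hlen], ?_⟩
      have : (a :: t).drop (l+1) = t.drop l := by simp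
      beta_reduce
      rw [this]
      exact valid_drop N l₀ a₀ htval l
    · intro u hu v hv hd
      obtain ⟨huE, hum⟩ := Finset.mem_filter.1 (Finset.mem_coe.1 hu)
      obtain ⟨hvE, hvm⟩ := Finset.mem_filter.1 (Finset.mem_coe.1 hv)
      obtain ⟨a, t, rfl, hlent, -⟩ := hmemE _ huE
      obtain ⟨b, r, rfl, hlenr, -⟩ := hmemE _ hvE
      exact badLS_inj a₀ hs.1 (n := n) (by simp [hlent]) (by simp [hlenr]) hum hvm hd
  have hBadcard : Bad.card ≤ ∑ l ∈ Finset.Icc l₀ n, N l * (V (n - l)).card := by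
    calc Bad.card ≤ _ := Finset.card_le_card hcover
    _ ≤ ∑ l ∈ Finset.Icc l₀ n,
        ((Finset.Icc 1 (N l)).biUnion (fun s => BadLS l s)).card :=
      Finset.card_biUnion_le
    _ ≤ ∑ l ∈ Finset.Icc l₀ n, ∑ s ∈ Finset.Icc 1 (N l), (BadLS l s).card :=
      Finset.sum_le_sum fun l _ => Finset.card_biUnion_le
    _ ≤ ∑ l ∈ Finset.Icc l₀ n, ∑ s ∈ Finset.Icc 1 (N l), (V (n - l)).card :=
      Finset.sum_le_sum fun l hl => Finset.sum_le_sum fun s hs => hBadLScard l hl s hs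
    _ = ∑ l ∈ Finset.Icc l₀ n, N l * (V (n - l)).card := by
      refine Finset.sum_congr rfl fun l _ => ?_
      rw [Finset.sum_const, Nat.card_Icc]
      simp [mul_comm]
  calc Fintype.card A * (V n).card = E.card := hEcard.symm
  _ = Good.card + Bad.card := hsplitE.symm
  _ ≤ (V (n+1)).card + Bad.card := Nat.add_le_add_right (Finset.card_le_card hGsub) _
  _ ≤ _ := Nat.add_le_add_left hBadcard _

lemma growth (c : ℝ) (hc1 : 1 ≤ c)
    (hcrit : ∀ n, ∑ l ∈ Finset.Icc l₀ n, (N l : ℝ) / c ^ l ≤ (Fintype.card A : ℝ) - c) :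
    ∀ n, c * ((VS N l₀ a₀ n).card : ℝ) ≤ ((VS N l₀ a₀ (n+1)).card : ℝ) := by
  intro n
  induction n using Nat.strong_induction_on with
  | _ n ih =>
  have hchain : ∀ l, l ≤ n →
      c ^ l * ((VS N l₀ a₀ (n - l)).card : ℝ) ≤ ((VS N l₀ a₀ n).card : ℝ) := by
    intro l
    induction l with
    | zero => intro _; simp
    | succ l ihl =>
      intro hln
      have h1 := ih (n - (l+1)) (by omega)
      have e : n - (l+1) + 1 = n - l := by omega
      rw [e] at h1
      calc c ^ (l+1) * ((VS N l₀ a₀ (n - (l+1))).card : ℝ)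
          = c ^ l * (c * ((VS N l₀ a₀ (n - (l+1))).card : ℝ)) := by ring
        _ ≤ c ^ l * ((VS N l₀ a₀ (n - l)).card : ℝ) :=
            mul_le_mul_of_nonneg_left h1 (pow_nonneg (by linarith) l)
        _ ≤ _ := ihl (by omega)
  have hstepR : (Fintype.card A : ℝ) * ((VS N l₀ a₀ n).card : ℝ) ≤
      ((VS N l₀ a₀ (n+1)).card : ℝ) +
        ∑ l ∈ Finset.Icc l₀ n, (N l : ℝ) * ((VS N l₀ a₀ (n - l)).card : ℝ) := by
    have := card_step N l₀ a₀ n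
    exact_mod_cast this
  have hterm : ∀ l ∈ Finset.Icc l₀ n,
      (N l : ℝ) * ((VS N l₀ a₀ (n - l)).card : ℝ) ≤
        ((N l : ℝ) / c ^ l) * ((VS N l₀ a₀ n).card : ℝ) := by
    intro l hl
    rw [Finset.mem_Icc] at hl
    have hch := hchain l hl.2
    have hcl : (0:ℝ) < c ^ l := pow_pos (by linarith) l
    rw [div_mul_eq_mul_div, le_div_iff₀ hcl]
    have h2 : (N l : ℝ) * (c ^ l * ((VS N l₀ a₀ (n - l)).card : ℝ)) ≤
        (N l : ℝ) * ((VS N l₀ a₀ n).card : ℝ) :=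
      mul_le_mul_of_nonneg_left hch (Nat.cast_nonneg _)
    nlinarith [h2]
  have hsum : ∑ l ∈ Finset.Icc l₀ n, (N l : ℝ) * ((VS N l₀ a₀ (n - l)).card : ℝ) ≤
      (∑ l ∈ Finset.Icc l₀ n, (N l : ℝ) / c ^ l) * ((VS N l₀ a₀ n).card : ℝ) := by
    rw [Finset.sum_mul]
    exact Finset.sum_le_sum hterm
  have hVn : (0:ℝ) ≤ ((VS N l₀ a₀ n).card : ℝ) := Nat.cast_nonneg _
  have hcr := hcrit n
  nlinarith [mul_le_mul_of_nonneg_right hcr hVn]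

lemma one_le_cardVS (c : ℝ) (hc1 : 1 ≤ c)
    (hcrit : ∀ n, ∑ l ∈ Finset.Icc l₀ n, (N l : ℝ) / c ^ l ≤ (Fintype.card A : ℝ) - c) :
    ∀ n, 1 ≤ (VS N l₀ a₀ n).card := by
  intro n
  induction n with
  | zero =>
    have h0 : ([] : List A) ∈ VS N l₀ a₀ 0 := by
      refine (mem_VS N l₀ a₀).2 ⟨rfl, ?_⟩
      intro l hl s i hs hlen hmatch
      simp at hlen
    exact Finset.card_pos.2 ⟨[], h0⟩
  | succ n ihn =>
    have h := growth N l₀ a₀ c hc1 hcrit n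
    have h1 : (1:ℝ) ≤ ((VS N l₀ a₀ n).card : ℝ) := by exact_mod_cast ihn
    have : (1:ℝ) ≤ ((VS N l₀ a₀ (n+1)).card : ℝ) := by nlinarith
    exact_mod_cast this

lemma exists_validL (c : ℝ) (hc1 : 1 ≤ c)
    (hcrit : ∀ n, ∑ l ∈ Finset.Icc l₀ n, (N l : ℝ) / c ^ l ≤ (Fintype.card A : ℝ) - c) :
    ∀ n, ∃ u : List A, u.length = n ∧ ValidL N l₀ a₀ u := by
  intro n
  obtain ⟨u, hu⟩ := Finset.card_pos.1 (one_le_cardVS N l₀ a₀ c hc1 hcrit n)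
  exact ⟨u, (mem_VS N l₀ a₀).1 hu⟩

lemma exists_biinfinite (hex : ∀ n, ∃ u : List A, u.length = 2*n+1 ∧ ValidL N l₀ a₀ u) :
    ∃ w : ℤ → A, ∀ l, l₀ ≤ l → ∀ (i : ℤ) (s : ℕ), 1 ≤ s →
      (∀ j : ℕ, j ≤ l → w (i + s + j) = w (i + j)) → N l < s := by
  choose u hulen huval using hex
  set f : ℕ → ℤ → A := fun n z => (u n).getD (z + n).toNat a₀ with hf
  set U : Ultrafilter ℕ := Ultrafilter.of Filter.atTop with hUdef
  have hU : (U : Filter ℕ) ≤ Filter.atTop := Ultrafilter.of_le _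
  have key : ∀ z : ℤ, ∃ a : A, {n | f n z = a} ∈ U := by
    intro z
    by_contra h
    push_neg at h
    have h2 : ∀ a : A, {n | f n z ≠ a} ∈ U := fun a =>
      (Ultrafilter.compl_mem_iff_notMem).2 (h a)
    have h3 : (⋂ a : A, {n | f n z ≠ a}) ∈ U := (Filter.iInter_mem).2 h2
    have h4 : (⋂ a : A, {n | f n z ≠ a}) = (∅ : Set ℕ) := by
      ext n; simp
    rw [h4] at h3
    exact Filter.empty_notMem _ h3
  choose w hw using key
  refine ⟨w, ?_⟩
  intro l hl i s hs hmatch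
  set W : Finset ℤ := Finset.Icc i (i + s + l) with hW
  have hfin : {n | ∀ z ∈ W, f n z = w z} ∈ U := by
    have h1 : ∀ z ∈ (W : Set ℤ), {n | f n z = w z} ∈ (U : Filter ℕ) := fun z _ => hw z
    have h2 := (Filter.biInter_mem W.finite_toSet).2 h1
    have h3 : (⋂ z ∈ (W : Set ℤ), {n | f n z = w z}) = {n | ∀ z ∈ W, f n z = w z} := by
      ext n; simp
    rwa [h3] at h2
  set M : ℕ := i.natAbs + s + l + 1 with hM
  have hMU : {n | M ≤ n} ∈ U := hU (Filter.mem_atTop M)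
  obtain ⟨n, hn1, hn2⟩ := Filter.nonempty_of_mem ((U : Filter ℕ).inter_mem hfin hMU)
  simp only [Set.mem_setOf_eq] at hn1 hn2
  have hin : (0:ℤ) ≤ i + n := by omega
  set i' : ℕ := (i + n).toNat with hi'def
  have hi' : (i' : ℤ) = i + n := Int.toNat_of_nonneg hin
  have hlen : i' + s + l < (u n).length := by
    rw [hulen n]; omega
  have hmatch' : ∀ j, j ≤ l → (u n).getD (i' + s + j) a₀ = (u n).getD (i' + j) a₀ := by
    intro j hj
    have hz1 : (i + s + j) ∈ W := by
      rw [hW, Finset.mem_Icc]; constructor <;> [omega; omega]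
    have hz2 : (i + j : ℤ) ∈ W := by
      rw [hW, Finset.mem_Icc]; constructor <;> [omega; omega]
    have e1 : ((i + s + j : ℤ) + n).toNat = i' + (s + j) := by omega
    have e2 : ((i + j : ℤ) + n).toNat = i' + j := by omega
    have a1 := hn1 _ hz1
    have a2 := hn1 _ hz2
    rw [hf] at a1 a2
    simp only at a1 a2
    rw [e1] at a1
    rw [e2] at a2
    have e3 : i' + s + j = i' + (s + j) := by omega
    rw [e3, a1, a2, hmatch j hj]
  exact huval n l hl s i' hs hlen hmatch'

lemma sum_Icc_pow_le (ρ : ℝ) (h0 : 0 ≤ ρ) (h1 : ρ < 1) :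
    ∀ q l₀ m : ℕ, m ≤ l₀ + q → ∑ l ∈ Finset.Icc l₀ m, ρ ^ l ≤ ρ ^ l₀ / (1 - ρ) := by
  have h1ρ : (0:ℝ) < 1 - ρ := by linarith
  intro q
  induction q with
  | zero =>
    intro l₀ m hm
    rcases Nat.lt_or_ge m l₀ with h | h
    · rw [Finset.Icc_eq_empty (by omega)]
      simp
      positivity
    · have : m = l₀ := by omega
      subst this
      rw [Finset.Icc_self, Finset.sum_singleton]
      rw [le_div_iff₀ h1ρ]
      nlinarith [pow_nonneg h0 m]
  | succ q ihq =>
    intro l₀ m hm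
    rcases Nat.lt_or_ge m l₀ with h | h
    · rw [Finset.Icc_eq_empty (by omega)]
      simp
      positivity
    · have hsplit : Finset.Icc l₀ m = insert l₀ (Finset.Icc (l₀+1) m) := by
        rw [Finset.Icc_add_one_left_eq_Ioc, Finset.Ioc_insert_left h]
      rw [hsplit, Finset.sum_insert (by simp [Finset.Icc_add_one_left_eq_Ioc])]
      have hih := ihq (l₀+1) m (by omega)
      have heq : ρ ^ l₀ / (1 - ρ) = ρ ^ l₀ + ρ ^ (l₀+1) / (1 - ρ) := by
        field_simp
        ring
      rw [heq]
      linarith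

end Aux19


/-- Theorem 1.1: If `φ : ℕ → [0,∞)` is non-decreasing with
`limsup (1/l)·ln φ(l) ≤ δ·ln k` for some `0 < δ < 1`, then there exist `l₀` and a
biinfinite word `w` over an alphabet of `k ≥ 2` symbols such that `R_w(l) ≥ φ(l)`
for every `l ≥ l₀`. -/
theorem exists_word_with_large_recurrence_time {A : Type*} [Fintype A]
    (k : ℕ) (hk : Fintype.card A = k) (hk2 : 2 ≤ k)
    (δ : ℝ) (hδ0 : 0 < δ) (hδ1 : δ < 1)
    (φ : ℕ → ℝ) (hmono : Monotone φ) (hnonneg : ∀ l : ℕ, 0 ≤ φ l)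
    (hlim : ∀ ε : ℝ, 0 < ε → ∀ᶠ l : ℕ in Filter.atTop,
      Real.log (φ l) / l ≤ δ * Real.log k + ε) :
    ∃ (l₀ : ℕ) (w : ℤ → A), ∀ l : ℕ, l₀ ≤ l →
      φ l ≤ (sInf {s : ℕ | 1 ≤ s ∧ ∃ i : ℤ, ∀ j : ℕ, j ≤ l →
        w (i + s + j) = w (i + j)} : ℕ) := by
  classical
  have hA : Nonempty A := by
    rw [← Fintype.card_pos_iff, hk]; omega
  obtain ⟨a₀⟩ := hA
  set K : ℝ := (k : ℝ) with hKdef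
  have hK2 : (2:ℝ) ≤ K := by rw [hKdef]; exact_mod_cast hk2
  have hK1 : 1 < K := by linarith
  have hK0 : 0 < K := by linarith
  set θ : ℝ := (1 + δ)/2 with hθdef
  have hθδ : δ < θ := by rw [hθdef]; linarith
  have hθ1 : θ < 1 := by rw [hθdef]; linarith
  have hθ0 : 0 < θ := by rw [hθdef]; linarith
  set kθ : ℝ := K ^ θ with hkθdef
  have hkθ1 : 1 < kθ := (Real.one_lt_rpow_iff hK0.le).2 (Or.inl ⟨hK1, hθ0⟩)
  have hkθK : kθ < K := by
    have h := (Real.rpow_lt_rpow_left_iff hK1).2 hθ1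
    rw [Real.rpow_one] at h
    exact h
  set c : ℝ := (K + kθ)/2 with hcdef
  have hc1 : 1 ≤ c := by rw [hcdef]; linarith
  have hckθ : kθ < c := by rw [hcdef]; linarith
  have hcK : c < K := by rw [hcdef]; linarith
  have hc0 : 0 < c := by linarith
  set ρ : ℝ := kθ / c with hρdef
  have hρ0 : 0 ≤ ρ := by positivity
  have hρ1 : ρ < 1 := (div_lt_one hc0).2 hckθ
  have h1ρ : 0 < 1 - ρ := by linarith
  set N : ℕ → ℕ := fun l => ⌈K ^ (θ * (l:ℝ))⌉₊ with hNdef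
  have hrwkθ : ∀ l : ℕ, K ^ (θ * (l:ℝ)) = kθ ^ l := by
    intro l
    rw [hkθdef, ← Real.rpow_natCast (K ^ θ) l, ← Real.rpow_mul hK0.le]
  have hNle : ∀ l : ℕ, (N l : ℝ) ≤ 2 * kθ ^ l := by
    intro l
    have h1 : (N l : ℝ) < K ^ (θ * (l:ℝ)) + 1 := Nat.ceil_lt_add_one (by positivity)
    have h2 : 1 ≤ kθ ^ l := one_le_pow₀ hkθ1.le
    rw [hrwkθ l] at h1
    linarith
  have hKc0 : 0 < (K - c) * (1 - ρ) / 2 := by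
    have : 0 < K - c := by linarith
    positivity
  obtain ⟨l₀a, hl₀a⟩ := exists_pow_lt_of_lt_one hKc0 hρ1
  have hcrit : ∀ n, ∑ l ∈ Finset.Icc l₀a n, (N l : ℝ) / c ^ l ≤ (Fintype.card A : ℝ) - c := by
    intro n
    have hterm : ∀ l ∈ Finset.Icc l₀a n, (N l : ℝ) / c ^ l ≤ 2 * ρ ^ l := by
      intro l _
      rw [div_le_iff₀ (pow_pos hc0 l)]
      have hρc : ρ ^ l * c ^ l = kθ ^ l := by
        rw [← mul_pow, hρdef, div_mul_cancel₀ _ (ne_of_gt hc0)]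
      calc (N l : ℝ) ≤ 2 * kθ ^ l := hNle l
        _ = 2 * ρ ^ l * c ^ l := by rw [mul_assoc, hρc]
    calc ∑ l ∈ Finset.Icc l₀a n, (N l : ℝ) / c ^ l
        ≤ ∑ l ∈ Finset.Icc l₀a n, 2 * ρ ^ l := Finset.sum_le_sum hterm
      _ = 2 * ∑ l ∈ Finset.Icc l₀a n, ρ ^ l := (Finset.mul_sum _ _ _).symm
      _ ≤ 2 * (ρ ^ l₀a / (1 - ρ)) := by
          have := Aux19.sum_Icc_pow_le ρ hρ0 hρ1 n l₀a n (by omega)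
          linarith
      _ ≤ (Fintype.card A : ℝ) - c := by
          rw [hk, ← hKdef, ← mul_div_assoc, div_le_iff₀ h1ρ]
          nlinarith [hl₀a]
  have hex := Aux19.exists_validL N l₀a a₀ c hc1 hcrit
  have hex2 : ∀ n, ∃ u : List A, u.length = 2*n+1 ∧ Aux19.ValidL N l₀a a₀ u :=
    fun n => hex (2*n+1)
  obtain ⟨w, hw⟩ := Aux19.exists_biinfinite N l₀a a₀ hex2
  have hε : 0 < (θ - δ) * Real.log K := by
    have hlog : 0 < Real.log K := Real.log_pos hK1
    have : 0 < θ - δ := by linarith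
    positivity
  obtain ⟨l₁, hl₁⟩ := Filter.eventually_atTop.1 (hlim _ hε)
  refine ⟨max l₀a (max l₁ 1), w, ?_⟩
  intro l hl
  have hll₀ : l₀a ≤ l := le_trans (le_max_left _ _) hl
  have hll₁ : l₁ ≤ l := le_trans (le_trans (le_max_left _ _) (le_max_right _ _)) hl
  have hl1 : 1 ≤ l := le_trans (le_trans (le_max_right _ _) (le_max_right _ _)) hl
  set S : Set ℕ := {s : ℕ | 1 ≤ s ∧ ∃ i : ℤ, ∀ j : ℕ, j ≤ l →
    w (i + s + j) = w (i + j)} with hSdef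
  have hSne : S.Nonempty := by
    have hpair : ∀ m m' : ℕ, m < m' →
        ((fun (j : Fin (l+1)) => w ((m:ℤ) + (j.val : ℤ))) =
         (fun (j : Fin (l+1)) => w ((m':ℤ) + (j.val : ℤ)))) → S.Nonempty := by
      intro m m' hlt heq
      refine ⟨m' - m, ⟨by omega, ⟨(m : ℤ), ?_⟩⟩⟩
      intro j hj
      have h := congrFun heq ⟨j, by omega⟩
      simp only at h
      have e1 : (m:ℤ) + ((m' - m : ℕ) : ℤ) + (j:ℤ) = (m':ℤ) + (j:ℤ) := by
        push_cast [Nat.cast_sub hlt.le]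
        ring
      rw [e1, ← h]
    obtain ⟨m, m', hne, heq⟩ :=
      Finite.exists_ne_map_eq_of_infinite
        (fun (m : ℕ) => (fun (j : Fin (l+1)) => w ((m:ℤ) + (j.val : ℤ))))
    rcases Nat.lt_or_ge m m' with hlt | hge
    · exact hpair m m' hlt heq
    · exact hpair m' m (by omega) heq.symm
  obtain ⟨hm1, i, hmi⟩ := Nat.sInf_mem hSne
  have hbig : N l < sInf S := hw l hll₀ i (sInf S) hm1 hmi
  have hφN : φ l ≤ (N l : ℝ) := by
    have hceil : K ^ (θ * (l:ℝ)) ≤ (N l : ℝ) := Nat.le_ceil _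
    rcases eq_or_lt_of_le (hnonneg l) with h0 | h0
    · calc φ l = 0 := h0.symm
        _ ≤ (N l : ℝ) := Nat.cast_nonneg _
    · have hlog := hl₁ l hll₁
      have hlpos : (0:ℝ) < (l:ℝ) := by exact_mod_cast hl1
      have h2 : Real.log (φ l) ≤ θ * (l:ℝ) * Real.log K := by
        have h3 := (div_le_iff₀ hlpos).1 hlog
        have e : (δ * Real.log K + (θ - δ) * Real.log K) = θ * Real.log K := by ring
        rw [hKdef] at h3 ⊢
        nlinarith
      have h3 : Real.log (φ l) ≤ Real.log (K ^ (θ * (l:ℝ))) := by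
        rw [Real.log_rpow hK0]
        linarith
      have h4 : φ l ≤ K ^ (θ * (l:ℝ)) :=
        (Real.log_le_log_iff h0 (Real.rpow_pos_of_pos hK0 _)).1 h3
      linarith
  have hfin : (N l : ℝ) ≤ ((sInf S : ℕ) : ℝ) := by
    exact_mod_cast le_of_lt hbig
  exact le_trans hφN hfin
end
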